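/- arXiv:math/0511347 — 8 statements merged into one kernel-verified Lean document; each statement's English description precedes it below -/
import Mathlib

section
/- Let E be a real Banach space and a < b real numbers. Let L : ℝ × E × E → ℝ be continuously Fréchet differentiable. Then for every x, h ∈ C¹([a,b];E), the real function s ↦ ∫_a^b L(t, x(t) + s·h(t), ẋ(t) + s·ḣ(t)) dt is differentiable at s = 0, and its derivative there equals ∫_a^b [ D_xL(t,x(t),ẋ(t))(h(t)) + D_vL(t,x(t),ẋ(t))(ḣ(t)) ] dt. -/
open Set intervalIntegral Metric

lemma fderiv_split_aux {E : Type*} [NormedAddCommGroup E] [NormedSpace ℝ E]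
    (L : ℝ × E × E → ℝ) (hL : ContDiff ℝ 1 L) (t : ℝ) (u v p q : E) :
    fderiv ℝ L (t, u, v) (0, p, q)
      = fderiv ℝ (fun y => L (t, y, v)) u p + fderiv ℝ (fun w => L (t, u, w)) v q := by
  have hd : HasFDerivAt L (fderiv ℝ L (t, u, v)) (t, u, v) :=
    (hL.differentiable one_ne_zero (t, u, v)).hasFDerivAt
  have h1 : HasFDerivAt (fun y : E => ((t, y, v) : ℝ × E × E))
      ((0 : E →L[ℝ] ℝ).prod ((ContinuousLinearMap.id ℝ E).prod 0)) u :=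
    (hasFDerivAt_const t u).prodMk ((hasFDerivAt_id u).prodMk (hasFDerivAt_const v u))
  have h2 : HasFDerivAt (fun w : E => ((t, u, w) : ℝ × E × E))
      ((0 : E →L[ℝ] ℝ).prod ((0 : E →L[ℝ] E).prod (ContinuousLinearMap.id ℝ E))) v :=
    (hasFDerivAt_const t v).prodMk ((hasFDerivAt_const u v).prodMk (hasFDerivAt_id v))
  have e1 : HasFDerivAt (fun y : E => L (t, y, v))
      ((fderiv ℝ L (t, u, v)).comp
        ((0 : E →L[ℝ] ℝ).prod ((ContinuousLinearMap.id ℝ E).prod 0))) u := hd.comp u h1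
  have e2 : HasFDerivAt (fun w : E => L (t, u, w))
      ((fderiv ℝ L (t, u, v)).comp
        ((0 : E →L[ℝ] ℝ).prod ((0 : E →L[ℝ] E).prod (ContinuousLinearMap.id ℝ E)))) v := hd.comp v h2
  rw [e1.fderiv, e2.fderiv]
  have hpq : ((0 : ℝ), p, q) = ((0 : ℝ), p, 0) + ((0 : ℝ), 0, q) := by simp [Prod.ext_iff]
  rw [hpq, map_add]
  simp

/-- **First variation formula.**
Let `E` be a real Banach space, `a < b`, and `L : ℝ × E × E → ℝ` continuously
Fréchet differentiable. For every `x, h ∈ C¹([a,b];E)` (represented by the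
curves together with their derivatives `x'`, `h'`), the function
`s ↦ ∫_a^b L(t, x(t) + s•h(t), ẋ(t) + s•ḣ(t)) dt` is differentiable at `s = 0`
with derivative `∫_a^b [D_x L(t,x,ẋ)(h) + D_v L(t,x,ẋ)(ḣ)] dt`. -/
theorem first_variation
    {E : Type*} [NormedAddCommGroup E] [NormedSpace ℝ E] [CompleteSpace E]
    (a b : ℝ) (hab : a < b)
    (L : ℝ × E × E → ℝ) (hL : ContDiff ℝ 1 L)
    (x x' h h' : ℝ → E)
    (hx : ∀ t ∈ Set.Icc a b, HasDerivWithinAt x (x' t) (Set.Icc a b) t)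
    (hx' : ContinuousOn x' (Set.Icc a b))
    (hh : ∀ t ∈ Set.Icc a b, HasDerivWithinAt h (h' t) (Set.Icc a b) t)
    (hh' : ContinuousOn h' (Set.Icc a b)) :
    HasDerivAt
      (fun s : ℝ => ∫ t in a..b, L (t, x t + s • h t, x' t + s • h' t))
      (∫ t in a..b,
        fderiv ℝ (fun y => L (t, y, x' t)) (x t) (h t)
          + fderiv ℝ (fun v => L (t, x t, v)) (x' t) (h' t)) 0 := by
  have hab' : a ≤ b := hab.le
  have hxc : ContinuousOn x (Set.Icc a b) := fun t ht => (hx t ht).continuousWithinAt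
  have hhc : ContinuousOn h (Set.Icc a b) := fun t ht => (hh t ht).continuousWithinAt
  set φ : ℝ → ℝ → ℝ × E × E := fun s t => (t, x t + s • h t, x' t + s • h' t) with hφ
  set F' : ℝ → ℝ → ℝ := fun s t => fderiv ℝ L (φ s t) (0, h t, h' t) with hF'
  -- continuity of φ s on Icc
  have hφc : ∀ s : ℝ, ContinuousOn (φ s) (Set.Icc a b) := fun s =>
    continuousOn_id.prodMk ((hxc.add (continuousOn_const.smul hhc)).prodMk
      (hx'.add (continuousOn_const.smul hh')))
  -- differentiability in s
  have hdiff : ∀ t ∈ Set.Icc a b, ∀ s : ℝ,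
      HasDerivAt (fun s => L (φ s t)) (F' s t) s := by
    intro t ht s
    have hφd : HasDerivAt (fun s : ℝ => φ s t) ((0 : ℝ), h t, h' t) s := by
      refine (hasDerivAt_const s t).prodMk (HasDerivAt.prodMk ?_ ?_)
      · simpa using
          (((hasDerivAt_id s).smul_const (h t)))
      · simpa using
          (((hasDerivAt_id s).smul_const (h' t)))
    exact ((hL.differentiable one_ne_zero (φ s t)).hasFDerivAt).comp_hasDerivAt s hφd
  -- compact set and bounds
  have hfst : ∀ p ∈ Set.Icc a b ×ˢ Set.Icc (-1 : ℝ) 1, p.1 ∈ Set.Icc a b :=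
    fun p hp => hp.1
  have hψ : ContinuousOn (fun p : ℝ × ℝ => φ p.2 p.1) (Set.Icc a b ×ˢ Set.Icc (-1 : ℝ) 1) := by
    refine continuousOn_fst.prodMk (ContinuousOn.prodMk ?_ ?_)
    · exact (hxc.comp continuousOn_fst hfst).add
        (continuousOn_snd.smul (hhc.comp continuousOn_fst hfst))
    · exact (hx'.comp continuousOn_fst hfst).add
        (continuousOn_snd.smul (hh'.comp continuousOn_fst hfst))
  have hK : IsCompact ((fun p : ℝ × ℝ => φ p.2 p.1) '' (Set.Icc a b ×ˢ Set.Icc (-1 : ℝ) 1)) :=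
    ((isCompact_Icc).prod isCompact_Icc).image_of_continuousOn hψ
  obtain ⟨M, hM⟩ := hK.exists_bound_of_continuousOn
    ((hL.continuous_fderiv one_ne_zero).continuousOn)
  obtain ⟨C1, hC1⟩ := (isCompact_Icc (a := a) (b := b)).exists_bound_of_continuousOn hhc
  obtain ⟨C2, hC2⟩ := (isCompact_Icc (a := a) (b := b)).exists_bound_of_continuousOn hh'
  have hM0 : 0 ≤ M := le_trans (norm_nonneg _)
    (hM _ ⟨(a, 0), ⟨⟨le_rfl, hab'⟩, by norm_num, by norm_num⟩, rfl⟩)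
  have hbound : ∀ t ∈ Set.Icc a b, ∀ s ∈ ball (0 : ℝ) 1,
      ‖F' s t‖ ≤ M * max C1 C2 := by
    intro t ht s hs
    have hsI : s ∈ Set.Icc (-1 : ℝ) 1 := by
      rw [mem_ball, Real.dist_eq, sub_zero] at hs
      exact ⟨neg_le_of_abs_le hs.le, le_of_abs_le hs.le⟩
    have h1 : ‖fderiv ℝ L (φ s t)‖ ≤ M := hM _ ⟨(t, s), ⟨ht, hsI⟩, rfl⟩
    have h2 : ‖((0 : ℝ), h t, h' t)‖ ≤ max C1 C2 := by
      have := hC1 t ht; have := hC2 t ht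
      rw [Prod.norm_def, Prod.norm_def]
      simp only [norm_zero]
      refine max_le ?_ (max_le ?_ ?_)
      · exact le_max_of_le_left (le_trans (norm_nonneg (h t)) (hC1 t ht))
      · exact le_max_of_le_left (hC1 t ht)
      · exact le_max_of_le_right (hC2 t ht)
    calc ‖F' s t‖ ≤ ‖fderiv ℝ L (φ s t)‖ * ‖((0 : ℝ), h t, h' t)‖ :=
          (fderiv ℝ L (φ s t)).le_opNorm _
      _ ≤ M * max C1 C2 := mul_le_mul h1 h2 (norm_nonneg _) hM0
  -- apply the dominated convergence theorem for derivatives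
  have key := intervalIntegral.hasDerivAt_integral_of_dominated_loc_of_deriv_le
    (F := fun s t => L (φ s t)) (F' := F') (x₀ := (0 : ℝ)) (a := a) (b := b)
    (bound := fun _ => M * max C1 C2) (μ := MeasureTheory.volume) (ball_mem_nhds 0 one_pos)
    (Filter.Eventually.of_forall fun s =>
      ((hL.continuous.comp_continuousOn (hφc s)).mono
        (uIoc_of_le hab' ▸ Set.Ioc_subset_Icc_self)).aestronglyMeasurable measurableSet_uIoc)
    (((hL.continuous.comp_continuousOn (hφc 0)).mono
        (uIcc_of_le hab' ▸ Set.Subset.rfl)).intervalIntegrable)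
    ((((hL.continuous_fderiv one_ne_zero).comp_continuousOn (hφc 0)).clm_apply
        (continuousOn_const.prodMk (hhc.prodMk hh'))).mono
        (uIoc_of_le hab' ▸ Set.Ioc_subset_Icc_self) |>.aestronglyMeasurable measurableSet_uIoc)
    (Filter.Eventually.of_forall fun t htI s hs =>
      hbound t ((uIoc_of_le hab' ▸ Set.Ioc_subset_Icc_self) htI) s hs)
    intervalIntegrable_const
    (Filter.Eventually.of_forall fun t htI s _ =>
      hdiff t ((uIoc_of_le hab' ▸ Set.Ioc_subset_Icc_self) htI) s)
  have heq : (∫ t in a..b, F' 0 t) = ∫ t in a..b,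
      fderiv ℝ (fun y => L (t, y, x' t)) (x t) (h t)
        + fderiv ℝ (fun v => L (t, x t, v)) (x' t) (h' t) := by
    refine intervalIntegral.integral_congr fun t _ => ?_
    simp only [hF', hφ, zero_smul, add_zero]
    exact fderiv_split_aux L hL t (x t) (x' t) (h t) (h' t)
  rw [← heq]
  exact key.2
end

section
/- Let E be a real Banach space, a < b, and L : ℝ × E × E → ℝ twice continuously Fréchet differentiable. Suppose x ∈ C¹([a,b];E) is a local minimizer (in the C¹ norm) of J[y] = ∫_a^b L(t,y(t),ẏ(t)) dt among curves with the same endpoint values. Then the map t ↦ D_vL(t,x(t),ẋ(t)), with values in the dual space E* = (E →L[ℝ] ℝ), is differentiable on [a,b], and for every t ∈ [a,b] it satisfies the Euler–Lagrange equation d/dt [ D_vL(t,x(t),ẋ(t)) ] = D_xL(t,x(t),ẋ(t)) as an identity in E*. -/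
open Set MeasureTheory intervalIntegral Metric Topology Filter
open scoped Interval

/-- FTC: derivative of the primitive within `Icc a b` at every point of `Icc a b`. -/
lemma EL.primitive_hasDerivWithinAt {F : Type*} [NormedAddCommGroup F] [NormedSpace ℝ F]
    [CompleteSpace F]
    {a b : ℝ} {f : ℝ → F} (hf : ContinuousOn f (Icc a b)) :
    ∀ t ∈ Icc a b, HasDerivWithinAt (fun u => ∫ s in a..u, f s) (f t) (Icc a b) t := by
  intro t ht
  haveI : Fact (t ∈ Icc a b) := ⟨ht⟩
  have hint : IntervalIntegrable f MeasureTheory.volume a t := by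
    apply ContinuousOn.intervalIntegrable
    apply hf.mono
    rw [Set.uIcc_of_le ht.1]
    exact Icc_subset_Icc le_rfl ht.2
  exact integral_hasDerivWithinAt_right hint
    ⟨Icc a b, self_mem_nhdsWithin, hf.aestronglyMeasurable measurableSet_Icc⟩ (hf t ht)

/-- A nonnegative continuous function on `[a,b]` with zero integral vanishes. -/
lemma EL.eq_zero_of_integral_eq_zero {a b : ℝ} (hab : a < b) {f : ℝ → ℝ}
    (hf : ContinuousOn f (Icc a b)) (hnn : ∀ s ∈ Icc a b, 0 ≤ f s)
    (hz : (∫ s in a..b, f s) = 0) : ∀ t ∈ Icc a b, f t = 0 := by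
  intro t ht
  by_contra hne
  have htpos : 0 < f t := lt_of_le_of_ne (hnn t ht) (Ne.symm hne)
  -- find a subinterval [u,v] ∋ t on which f ≥ f t / 2
  obtain ⟨δ, hδ, hball⟩ := Metric.continuousWithinAt_iff.1 (hf t ht) (f t / 2) (by linarith)
  set u := max a (t - δ / 2) with hu
  set v := min b (t + δ / 2) with hv
  have hau : a ≤ u := le_max_left _ _
  have hvb : v ≤ b := min_le_left _ _
  have huv : u < v := by
    apply max_lt <;> apply lt_min
    · exact hab
    · linarith [ht.1]
    · linarith [ht.2]
    · linarith
  have hsub : Icc u v ⊆ Icc a b := Icc_subset_Icc hau hvb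
  have hlow : ∀ s ∈ Icc u v, f t / 2 ≤ f s := by
    intro s hs
    have hs' : s ∈ Icc a b := hsub hs
    have hd : dist s t < δ := by
      rw [Real.dist_eq, abs_lt]
      constructor
      · have := hs.1; have := le_max_right a (t - δ / 2); linarith [hs.1.trans_lt' (lt_of_lt_of_le (by linarith : t - δ < t - δ/2) (le_max_right a (t - δ/2)))]
      · have h2 := hs.2; have h3 := min_le_right b (t + δ / 2); linarith
    have := hball hs' hd
    rw [Real.dist_eq, abs_lt] at this
    linarith
  have hi1 : IntervalIntegrable f volume a u :=
    (hf.mono (by rw [Set.uIcc_of_le hau]; exact Icc_subset_Icc le_rfl (huv.le.trans hvb))).intervalIntegrable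
  have hi2 : IntervalIntegrable f volume u v :=
    (hf.mono (by rw [Set.uIcc_of_le huv.le]; exact hsub)).intervalIntegrable
  have hi3 : IntervalIntegrable f volume v b :=
    (hf.mono (by rw [Set.uIcc_of_le hvb]; exact Icc_subset_Icc (hau.trans huv.le) le_rfl)).intervalIntegrable
  have hsplit : (∫ s in a..b, f s) = (∫ s in a..u, f s) + (∫ s in u..v, f s) + (∫ s in v..b, f s) := by
    rw [integral_add_adjacent_intervals hi1 hi2,
      integral_add_adjacent_intervals (hi1.trans hi2) hi3]
  have h1 : 0 ≤ ∫ s in a..u, f s :=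
    integral_nonneg hau (fun s hs => hnn s ⟨hs.1, hs.2.trans (huv.le.trans hvb)⟩)
  have h3 : 0 ≤ ∫ s in v..b, f s :=
    integral_nonneg hvb (fun s hs => hnn s ⟨(hau.trans huv.le).trans hs.1, hs.2⟩)
  have h2 : (v - u) * (f t / 2) ≤ ∫ s in u..v, f s := by
    have := intervalIntegral.integral_mono_on huv.le intervalIntegrable_const hi2 hlow
    rwa [intervalIntegral.integral_const, smul_eq_mul] at this
  have hpos : 0 < (v - u) * (f t / 2) := by
    apply mul_pos (by linarith) (by linarith)
  linarith

/-- du Bois-Reymond / constancy: if `∫ φ' g = 0` for all `C¹` test functions `φ`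
vanishing at the endpoints, then `g` is constant on `[a,b]`. -/
lemma EL.constant_of_integral_eq_zero {a b : ℝ} (hab : a < b) {g : ℝ → ℝ}
    (hg : ContinuousOn g (Icc a b))
    (hvar : ∀ φ φ' : ℝ → ℝ,
      (∀ s ∈ Icc a b, HasDerivWithinAt φ (φ' s) (Icc a b) s) →
      ContinuousOn φ' (Icc a b) → φ a = 0 → φ b = 0 →
      (∫ s in a..b, φ' s * g s) = 0) :
    ∀ t ∈ Icc a b, g t = (∫ s in a..b, g s) / (b - a) := by
  set c : ℝ := (∫ s in a..b, g s) / (b - a) with hc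
  have hgi : IntervalIntegrable g volume a b :=
    (hg.mono (by rw [Set.uIcc_of_le hab.le])).intervalIntegrable
  have hgc : ContinuousOn (fun s => g s - c) (Icc a b) := hg.sub continuousOn_const
  set φ : ℝ → ℝ := fun s => ∫ u in a..s, (g u - c) with hφdef
  have hφ : ∀ s ∈ Icc a b, HasDerivWithinAt φ (g s - c) (Icc a b) s :=
    EL.primitive_hasDerivWithinAt hgc
  have hφa : φ a = 0 := by simp [hφdef]
  have hφb : φ b = 0 := by
    have : (∫ u in a..b, (g u - c)) = (∫ u in a..b, g u) - (b - a) * c := by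
      rw [intervalIntegral.integral_sub hgi intervalIntegrable_const,
        intervalIntegral.integral_const, smul_eq_mul]
    simp only [hφdef]
    rw [this, hc, mul_div_cancel₀ _ (sub_ne_zero.mpr hab.ne'), sub_self]
  have hzero := hvar φ (fun s => g s - c) hφ hgc hφa hφb
  -- also ∫ (g - c) * c = 0
  have hzc : (∫ s in a..b, (g s - c) * c) = 0 := by
    rw [intervalIntegral.integral_mul_const]
    have : (∫ u in a..b, (g u - c)) = 0 := by
      rw [intervalIntegral.integral_sub hgi intervalIntegrable_const,
        intervalIntegral.integral_const, smul_eq_mul, hc, mul_div_cancel₀ _ (sub_ne_zero.mpr hab.ne'), sub_self]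
    rw [this, zero_mul]
  have hsq : (∫ s in a..b, (g s - c) ^ 2) = 0 := by
    have : ∀ s, (g s - c) ^ 2 = (g s - c) * g s - (g s - c) * c := by intro s; ring
    simp_rw [this]
    rw [intervalIntegral.integral_sub, hzero, hzc, sub_zero]
    · exact ((hgc.mul hg).mono (by rw [Set.uIcc_of_le hab.le])).intervalIntegrable
    · exact ((hgc.mul continuousOn_const).mono (by rw [Set.uIcc_of_le hab.le])).intervalIntegrable
  intro t ht
  have := EL.eq_zero_of_integral_eq_zero hab
    (f := fun s => (g s - c) ^ 2) (by exact hgc.pow 2)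
    (fun s _ => sq_nonneg _) hsq t ht
  have h2 : (g t - c) ^ 2 = 0 := this
  have h3 : g t - c = 0 := by nlinarith [h2]
  linarith

/-- **Euler–Lagrange equation on a Banach space.**
If `L` is twice continuously Fréchet differentiable and `x ∈ C¹([a,b];E)` is a
local minimizer (w.r.t. the `C¹` norm) of `J[y] = ∫_a^b L(t,y,ẏ) dt` among
curves with the same endpoint values, then `t ↦ D_v L(t,x(t),ẋ(t))` (with
values in `E* = E →L[ℝ] ℝ`) is differentiable on `[a,b]` and satisfies
`d/dt [D_v L(t,x(t),ẋ(t))] = D_x L(t,x(t),ẋ(t))` for all `t ∈ [a,b]`. -/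
theorem euler_lagrange
    {E : Type*} [NormedAddCommGroup E] [NormedSpace ℝ E] [CompleteSpace E]
    (a b : ℝ) (hab : a < b)
    (L : ℝ × E × E → ℝ) (hL : ContDiff ℝ 2 L)
    (x x' : ℝ → E)
    (hx : ∀ t ∈ Set.Icc a b, HasDerivWithinAt x (x' t) (Set.Icc a b) t)
    (hx' : ContinuousOn x' (Set.Icc a b))
    (hmin : ∃ ε > (0 : ℝ), ∀ y y' : ℝ → E,
      (∀ t ∈ Set.Icc a b, HasDerivWithinAt y (y' t) (Set.Icc a b) t) →
      ContinuousOn y' (Set.Icc a b) →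
      y a = x a → y b = x b →
      (∀ t ∈ Set.Icc a b, ‖y t - x t‖ + ‖y' t - x' t‖ ≤ ε) →
      (∫ t in a..b, L (t, x t, x' t)) ≤ ∫ t in a..b, L (t, y t, y' t)) :
    ∀ t ∈ Set.Icc a b,
      HasDerivWithinAt (fun τ => fderiv ℝ (fun v => L (τ, x τ, v)) (x' τ))
        (fderiv ℝ (fun y => L (t, y, x' t)) (x t)) (Set.Icc a b) t := by
  have hL1 : ContDiff ℝ 1 L := hL.of_le one_le_two
  have hLd : Differentiable ℝ L := hL1.differentiable one_ne_zero
  have hdLc : Continuous (fderiv ℝ L) := hL1.continuous_fderiv one_ne_zero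
  set inx : E →L[ℝ] ℝ × E × E :=
    (ContinuousLinearMap.inr ℝ ℝ (E × E)).comp (ContinuousLinearMap.inl ℝ E E) with hinx
  set inv : E →L[ℝ] ℝ × E × E :=
    (ContinuousLinearMap.inr ℝ ℝ (E × E)).comp (ContinuousLinearMap.inr ℝ E E) with hinv
  -- slice derivatives
  have hslice_v : ∀ (τ : ℝ) (p v : E),
      HasFDerivAt (fun w => L (τ, p, w)) ((fderiv ℝ L (τ, p, v)).comp inv) v := by
    intro τ p v
    have h1 : HasFDerivAt (fun w : E => ((τ : ℝ), p, w)) inv v := by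
      have h0 := (inv.hasFDerivAt (x := v)).const_add ((τ, p, (0:E)) : ℝ × E × E)
      have heq : (fun w : E => ((τ, p, (0:E)) : ℝ × E × E) + inv w)
          = fun w : E => ((τ : ℝ), p, w) := by
        funext w; simp [hinv, Prod.mk_add_mk]
      rwa [heq] at h0
    exact (hLd (τ, p, v)).hasFDerivAt.comp v h1
  have hslice_x : ∀ (τ : ℝ) (p v : E),
      HasFDerivAt (fun y => L (τ, y, v)) ((fderiv ℝ L (τ, p, v)).comp inx) p := by
    intro τ p v
    have h1 : HasFDerivAt (fun y : E => ((τ : ℝ), y, v)) inx p := by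
      have h0 := (inx.hasFDerivAt (x := p)).const_add ((τ, (0:E), v) : ℝ × E × E)
      have heq : (fun y : E => ((τ, (0:E), v) : ℝ × E × E) + inx y)
          = fun y : E => ((τ : ℝ), y, v) := by
        funext y; simp [hinx, Prod.mk_add_mk]
      rwa [heq] at h0
    exact (hLd (τ, p, v)).hasFDerivAt.comp p h1
  set f : ℝ → ℝ × E × E := fun τ => (τ, x τ, x' τ) with hfdef
  set P : ℝ → E →L[ℝ] ℝ := fun τ => (fderiv ℝ L (f τ)).comp inv with hPdef
  set A : ℝ → E →L[ℝ] ℝ := fun τ => (fderiv ℝ L (f τ)).comp inx with hAdef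
  have hxc : ContinuousOn x (Icc a b) := fun s hs => (hx s hs).continuousWithinAt
  have hfc : ContinuousOn f (Icc a b) := continuousOn_id.prodMk (hxc.prodMk hx')
  have hdLfc : ContinuousOn (fun τ => fderiv ℝ L (f τ)) (Icc a b) := hdLc.comp_continuousOn hfc
  have hPc : ContinuousOn P (Icc a b) := hdLfc.clm_comp continuousOn_const
  have hAc : ContinuousOn A (Icc a b) := hdLfc.clm_comp continuousOn_const
  -- first variation
  have hvar : ∀ e : E, ∀ φ φ' : ℝ → ℝ,
      (∀ s ∈ Icc a b, HasDerivWithinAt φ (φ' s) (Icc a b) s) →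
      ContinuousOn φ' (Icc a b) → φ a = 0 → φ b = 0 →
      (∫ s in a..b, (φ s * A s e + φ' s * P s e)) = 0 := by
    obtain ⟨ε, hε, hm⟩ := hmin
    intro e φ φ' hφ hφ'c hφa hφb
    have hφc : ContinuousOn φ (Icc a b) := fun s hs => (hφ s hs).continuousWithinAt
    set w : ℝ → ℝ × E × E := fun s => ((0:ℝ), φ s • e, φ' s • e) with hwdef
    set F : ℝ → ℝ → ℝ := fun σ s => L (f s + σ • w s) with hFdef
    set F' : ℝ → ℝ → ℝ := fun σ s => fderiv ℝ L (f s + σ • w s) (w s) with hF'def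
    have hwc : ContinuousOn w (Icc a b) :=
      continuousOn_const.prodMk ((hφc.smul continuousOn_const).prodMk (hφ'c.smul continuousOn_const))
    have hI : Ι a b = Ioc a b := uIoc_of_le hab.le
    have hIsub : Ι a b ⊆ Icc a b := by rw [hI]; exact Ioc_subset_Icc_self
    -- derivative in the parameter σ
    have hdiff : ∀ s : ℝ, ∀ σ : ℝ, HasDerivAt (fun σ => F σ s) (F' σ s) σ := by
      intro s σ
      have hc : HasDerivAt (fun σ : ℝ => f s + σ • w s) (w s) σ := by
        simpa using ((hasDerivAt_id σ).smul_const (w s)).const_add (f s)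
      exact (hLd (f s + σ • w s)).hasFDerivAt.comp_hasDerivAt σ hc
    -- uniform bound on the compact set
    obtain ⟨C₀, hC₀⟩ := (isCompact_Icc.prod (isCompact_Icc (a := (-1:ℝ)) (b := 1))).exists_bound_of_continuousOn
      (f := fun p : ℝ × ℝ => fderiv ℝ L (f p.1 + p.2 • w p.1))
      ((hdLc.comp_continuousOn ((hfc.comp continuousOn_fst (fun p hp => hp.1)).add
        ((continuousOn_snd).smul (hwc.comp continuousOn_fst (fun p hp => hp.1))))))
    obtain ⟨C₁, hC₁⟩ := isCompact_Icc.exists_bound_of_continuousOn hwc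
    have hC₀0 : 0 ≤ C₀ := le_trans (norm_nonneg _) (hC₀ (a, 0) ⟨⟨le_rfl, hab.le⟩, by norm_num⟩)
    have hbound : ∀ᵐ s ∂(volume : Measure ℝ), s ∈ Ι a b → ∀ σ ∈ ball (0:ℝ) 1,
        ‖F' σ s‖ ≤ C₀ * C₁ := by
      apply Filter.Eventually.of_forall
      intro s hs σ hσ
      have hsI : s ∈ Icc a b := hIsub hs
      have hσI : σ ∈ Icc (-1:ℝ) 1 := by
        rw [mem_ball, Real.dist_eq, sub_zero] at hσ
        exact ⟨neg_le_of_abs_le hσ.le, le_of_abs_le hσ.le⟩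
      calc ‖F' σ s‖ ≤ ‖fderiv ℝ L (f s + σ • w s)‖ * ‖w s‖ :=
            (fderiv ℝ L (f s + σ • w s)).le_opNorm (w s)
        _ ≤ C₀ * C₁ :=
            mul_le_mul (hC₀ (s, σ) ⟨hsI, hσI⟩) (hC₁ s hsI) (norm_nonneg _) hC₀0
    have hFmeas : ∀ᶠ σ in 𝓝 (0:ℝ), AEStronglyMeasurable (F σ) (volume.restrict (Ι a b)) := by
      apply Filter.Eventually.of_forall
      intro σ
      have : ContinuousOn (F σ) (Icc a b) :=
        hL.continuous.comp_continuousOn (hfc.add (hwc.const_smul σ))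
      rw [hI]
      exact (this.mono Ioc_subset_Icc_self).aestronglyMeasurable measurableSet_Ioc
    have hF'c : ContinuousOn (F' 0) (Icc a b) :=
      (hdLc.comp_continuousOn (hfc.add (hwc.const_smul (0:ℝ)))).clm_apply hwc
    have hF'meas : AEStronglyMeasurable (F' 0) (volume.restrict (Ι a b)) := by
      rw [hI]
      exact (hF'c.mono Ioc_subset_Icc_self).aestronglyMeasurable measurableSet_Ioc
    have hFint : IntervalIntegrable (F 0) volume a b := by
      apply ContinuousOn.intervalIntegrable
      rw [uIcc_of_le hab.le]
      exact hL.continuous.comp_continuousOn (hfc.add (hwc.const_smul (0:ℝ)))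
    have hdiff' : ∀ᵐ s ∂(volume : Measure ℝ), s ∈ Ι a b → ∀ σ ∈ ball (0:ℝ) 1,
        HasDerivAt (fun σ => F σ s) (F' σ s) σ :=
      Filter.Eventually.of_forall (fun s _ σ _ => hdiff s σ)
    obtain ⟨-, hg⟩ := intervalIntegral.hasDerivAt_integral_of_dominated_loc_of_deriv_le
      (Metric.ball_mem_nhds (0:ℝ) one_pos) hFmeas hFint hF'meas hbound intervalIntegrable_const hdiff'
    -- the function is locally minimal at σ = 0
    have hFσ : ∀ σ s, F σ s = L (s, x s + (σ * φ s) • e, x' s + (σ * φ' s) • e) := by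
      intro σ s
      simp [hFdef, hwdef, hfdef, Prod.smul_mk, Prod.mk_add_mk, smul_smul]
    obtain ⟨M₀, hM₀⟩ := isCompact_Icc.exists_bound_of_continuousOn
      (f := fun s => |φ s| + |φ' s|) (hφc.abs.add hφ'c.abs)
    set M : ℝ := max M₀ 0 with hMdef
    have hM : ∀ s ∈ Icc a b, |φ s| + |φ' s| ≤ M := by
      intro s hs
      have := hM₀ s hs
      have h2 : |φ s| + |φ' s| ≤ ‖|φ s| + |φ' s|‖ := le_abs_self _
      exact (h2.trans this).trans (le_max_left _ _)
    have hM0 : 0 ≤ M := le_max_right _ _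
    set δ : ℝ := ε / ((M + 1) * (‖e‖ + 1)) with hδdef
    have hD : 0 < (M + 1) * (‖e‖ + 1) := by positivity
    have hδ : 0 < δ := div_pos hε hD
    have hlocmin : IsLocalMin (fun σ => ∫ s in a..b, F σ s) 0 := by
      filter_upwards [Metric.ball_mem_nhds (0:ℝ) hδ] with σ hσ
      rw [mem_ball, Real.dist_eq, sub_zero] at hσ
      have happly := hm (fun s => x s + (σ * φ s) • e) (fun s => x' s + (σ * φ' s) • e)
        (fun s hs => (hx s hs).add (((hφ s hs).const_mul σ).smul_const e))
        (hx'.add ((continuousOn_const.mul hφ'c).smul continuousOn_const))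
        (by simp [hφa]) (by simp [hφb])
        (by
          intro s hs
          have h1 : ‖x s + (σ * φ s) • e - x s‖ = |σ| * |φ s| * ‖e‖ := by
            simp [norm_smul, abs_mul, mul_assoc]
          have h2 : ‖x' s + (σ * φ' s) • e - x' s‖ = |σ| * |φ' s| * ‖e‖ := by
            simp [norm_smul, abs_mul, mul_assoc]
          rw [h1, h2]
          have hφs := hM s hs
          have h3 : |σ| * |φ s| * ‖e‖ + |σ| * |φ' s| * ‖e‖ = |σ| * ((|φ s| + |φ' s|) * ‖e‖) := by
            ring
          rw [h3]
          have h4 : (|φ s| + |φ' s|) * ‖e‖ ≤ (M + 1) * (‖e‖ + 1) := by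
            apply mul_le_mul (by linarith) (by linarith) (norm_nonneg _) (by linarith)
          have h5 : |σ| * ((|φ s| + |φ' s|) * ‖e‖) ≤ δ * ((M + 1) * (‖e‖ + 1)) := by
            apply mul_le_mul hσ.le h4 (by positivity) hδ.le
          have h6 : δ * ((M + 1) * (‖e‖ + 1)) = ε := by
            rw [hδdef]; field_simp
          linarith)
      calc (∫ s in a..b, F 0 s) = ∫ s in a..b, L (s, x s, x' s) := by
            congr 1; funext s; rw [hFσ]; simp
        _ ≤ ∫ s in a..b, L (s, x s + (σ * φ s) • e, x' s + (σ * φ' s) • e) := happly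
        _ = ∫ s in a..b, F σ s := by congr 1; funext s; rw [hFσ]
    have hder0 : (∫ s in a..b, F' 0 s) = 0 := hlocmin.hasDerivAt_eq_zero hg
    have hintegrand : (fun s => φ s * A s e + φ' s * P s e) = F' 0 := by
      funext s
      have h1 : f s + (0:ℝ) • w s = f s := by simp
      have h2 : w s = φ s • (inx e) + φ' s • (inv e) := by
        simp [hwdef, hinx, hinv, Prod.mk_add_mk, Prod.smul_mk]
      rw [hF'def]
      simp only [h1, h2, map_add, _root_.map_smul]
      simp [hPdef, hAdef, smul_eq_mul]
    rw [hintegrand]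
    exact hder0
  -- du Bois-Reymond step, pointwise in `e`
  have key : ∀ (e : E), ∀ τ ∈ Icc a b, P τ e = P a e + ∫ s in a..τ, A s e := by
    intro e
    have haec : ContinuousOn (fun s => A s e) (Icc a b) := hAc.clm_apply continuousOn_const
    have hpec : ContinuousOn (fun s => P s e) (Icc a b) := hPc.clm_apply continuousOn_const
    set G : ℝ → ℝ := fun s => ∫ u in a..s, A u e with hGdef
    have hG : ∀ s ∈ Icc a b, HasDerivWithinAt G (A s e) (Icc a b) s :=
      EL.primitive_hasDerivWithinAt haec
    have hGc : ContinuousOn G (Icc a b) := fun s hs => (hG s hs).continuousWithinAt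
    have hvar2 : ∀ φ φ' : ℝ → ℝ,
        (∀ s ∈ Icc a b, HasDerivWithinAt φ (φ' s) (Icc a b) s) →
        ContinuousOn φ' (Icc a b) → φ a = 0 → φ b = 0 →
        (∫ s in a..b, φ' s * (P s e - G s)) = 0 := by
      intro φ φ' hφ hφ'c hφa hφb
      have hφc : ContinuousOn φ (Icc a b) := fun s hs => (hφ s hs).continuousWithinAt
      have hint1 : IntervalIntegrable (fun s => φ' s * G s + φ s * (A s e)) volume a b :=
        (((hφ'c.mul hGc).add (hφc.mul haec)).mono (by rw [uIcc_of_le hab.le])).intervalIntegrable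
      have hint2 : IntervalIntegrable (fun s => φ s * (A s e) + φ' s * (P s e)) volume a b :=
        (((hφc.mul haec).add (hφ'c.mul hpec)).mono (by rw [uIcc_of_le hab.le])).intervalIntegrable
      have hibp : (∫ s in a..b, (φ' s * G s + φ s * (A s e))) = 0 := by
        have hprod : ∀ s ∈ Icc a b, HasDerivWithinAt (fun u => φ u * G u)
            (φ' s * G s + φ s * (A s e)) (Icc a b) s :=
          fun s hs => (hφ s hs).mul (hG s hs)
        have hcont : ContinuousOn (fun u => φ u * G u) (Icc a b) := hφc.mul hGc
        have hderiv : ∀ s ∈ Ioo a b, HasDerivWithinAt (fun u => φ u * G u)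
            (φ' s * G s + φ s * (A s e)) (Ioi s) s := fun s hs =>
          ((hprod s (Ioo_subset_Icc_self hs)).hasDerivAt
            (Icc_mem_nhds hs.1 hs.2)).hasDerivWithinAt
        rw [integral_eq_sub_of_hasDeriv_right_of_le hab.le hcont hderiv hint1]
        simp [hφa, hφb]
      have hv := hvar e φ φ' hφ hφ'c hφa hφb
      have heq : (∫ s in a..b, φ' s * (P s e - G s))
          = (∫ s in a..b, (φ s * (A s e) + φ' s * (P s e)))
            - ∫ s in a..b, (φ' s * G s + φ s * (A s e)) := by
        rw [← intervalIntegral.integral_sub hint2 hint1]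
        congr 1; funext s; ring
      rw [heq, hv, hibp, sub_zero]
    have hconst := EL.constant_of_integral_eq_zero hab (g := fun s => P s e - G s)
      (hpec.sub hGc) hvar2
    intro τ hτ
    have h1 := hconst τ hτ
    have h2 := hconst a ⟨le_rfl, hab.le⟩
    have hGa : G a = 0 := by simp [hGdef]
    have h3 : P τ e - G τ = P a e - G a := h1.trans h2.symm
    rw [hGa, sub_zero] at h3
    have : G τ = ∫ s in a..τ, A s e := rfl
    linarith [h3]
  -- upgrade to an identity in E*
  have hAint : ∀ τ ∈ Icc a b, IntervalIntegrable A volume a τ := by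
    intro τ hτ
    apply ContinuousOn.intervalIntegrable
    apply hAc.mono
    rw [Set.uIcc_of_le hτ.1]
    exact Icc_subset_Icc le_rfl hτ.2
  have keyCLM : ∀ τ ∈ Icc a b, P τ = P a + ∫ s in a..τ, A s := by
    intro τ hτ
    ext e
    rw [ContinuousLinearMap.add_apply, ContinuousLinearMap.intervalIntegral_apply (hAint τ hτ) e]
    exact key e τ hτ
  intro t ht
  have hgoalfun : (fun τ => fderiv ℝ (fun v => L (τ, x τ, v)) (x' τ)) = P := by
    funext τ; exact (hslice_v τ (x τ) (x' τ)).fderiv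
  have hgoalA : fderiv ℝ (fun y => L (t, y, x' t)) (x t) = A t :=
    (hslice_x t (x t) (x' t)).fderiv
  rw [hgoalfun, hgoalA]
  have hprim := EL.primitive_hasDerivWithinAt hAc t ht
  exact ((hprim.const_add (P a)).congr (fun τ hτ => keyCLM τ hτ) (keyCLM t ht))
end

section
/- Let E be a real Banach space, a < b, and L : ℝ × E × E → ℝ twice continuously Fréchet differentiable. Suppose x ∈ C¹([a,b];E) is a local minimizer (in the C¹ norm) of J[y] = ∫_a^b L(t,y(t),ẏ(t)) dt among curves with the same endpoint values. Then x satisfies the Legendre condition: for every t ∈ [a,b] and every w ∈ E, D²_vvL(t,x(t),ẋ(t))(w,w) ≥ 0. -/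
open Set

set_option maxHeartbeats 1600000


section aux
variable {X : Type*} [NormedAddCommGroup X] [NormedSpace ℝ X]

lemma line_hasDerivAt (c ξ : X) (σ : ℝ) : HasDerivAt (fun σ : ℝ => c + σ • ξ) ξ σ := by
  simpa using ((hasDerivAt_id σ).smul_const ξ).const_add c

lemma fderiv_line_hasDerivAt {F : X → ℝ} (hF : ContDiff ℝ 2 F) (c ξ : X) (σ : ℝ) :
    HasDerivAt (fun σ : ℝ => fderiv ℝ F (c + σ • ξ) ξ)
      (fderiv ℝ (fderiv ℝ F) (c + σ • ξ) ξ ξ) σ := by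
  have hF' : ContDiff ℝ 1 (fderiv ℝ F) := hF.fderiv_right (by norm_num)
  have h1 : HasFDerivAt (fderiv ℝ F) (fderiv ℝ (fderiv ℝ F) (c + σ • ξ)) (c + σ • ξ) :=
    (hF'.differentiable (by norm_num)).differentiableAt.hasFDerivAt
  have h2 : HasDerivAt (fun σ : ℝ => fderiv ℝ F (c + σ • ξ))
      (fderiv ℝ (fderiv ℝ F) (c + σ • ξ) ξ) σ := h1.comp_hasDerivAt σ (line_hasDerivAt c ξ σ)
  simpa using h2.clm_apply (hasDerivAt_const σ ξ)

lemma F_line_hasDerivAt {F : X → ℝ} (hF : ContDiff ℝ 2 F) (c ξ : X) (σ : ℝ) :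
    HasDerivAt (fun σ : ℝ => F (c + σ • ξ)) (fderiv ℝ F (c + σ • ξ) ξ) σ := by
  have h1 : HasFDerivAt F (fderiv ℝ F (c + σ • ξ)) (c + σ • ξ) :=
    (hF.differentiable (by norm_num)).differentiableAt.hasFDerivAt
  exact h1.comp_hasDerivAt σ (line_hasDerivAt c ξ σ)

/-- symmetric second difference bound -/
lemma symm_second_diff_bound {F : X → ℝ} (hF : ContDiff ℝ 2 F) (c ξ : X) (s M : ℝ)
    (hM : ∀ σ ∈ Icc (-|s|) |s|,
      ‖fderiv ℝ (fderiv ℝ F) (c + σ • ξ) - fderiv ℝ (fderiv ℝ F) c‖ ≤ M) :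
    |F (c + s • ξ) + F (c + (-s) • ξ) - 2 * F c - s ^ 2 * (fderiv ℝ (fderiv ℝ F) c ξ ξ)|
      ≤ 2 * (M * ‖ξ‖ ^ 2) * s ^ 2 := by
  set Q := fderiv ℝ (fderiv ℝ F) with hQ
  set A : ℝ := Q c ξ ξ with hA
  set ψ : ℝ → ℝ := fun σ => fderiv ℝ F (c + σ • ξ) ξ with hψ
  set r := |s| with hr
  have hr0 : (0:ℝ) ≤ r := abs_nonneg s
  -- step 1 : |ψ σ - ψ 0 - σ A| ≤ (M * ‖ξ‖^2) * |σ| on Icc (-r) r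
  have step1 : ∀ σ ∈ Icc (-r) r, |ψ σ - ψ 0 - σ * A| ≤ (M * ‖ξ‖ ^ 2) * |σ| := by
    intro σ hσ
    have hderiv : ∀ τ ∈ Icc (-r) r,
        HasDerivWithinAt (fun τ => ψ τ - τ * A) (Q (c + τ • ξ) ξ ξ - A) (Icc (-r) r) τ := by
      intro τ _
      have h := ((fderiv_line_hasDerivAt hF c ξ τ).sub
        ((hasDerivAt_id τ).mul_const A)).hasDerivWithinAt (s := Icc (-r) r)
      rw [one_mul] at h
      exact h
    have hbound : ∀ τ ∈ Icc (-r) r, ‖Q (c + τ • ξ) ξ ξ - A‖ ≤ M * ‖ξ‖ ^ 2 := by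
      intro τ hτ
      have : Q (c + τ • ξ) ξ ξ - A = ((Q (c + τ • ξ) - Q c) ξ) ξ := by
        simp [hA]
      rw [this]
      calc ‖((Q (c + τ • ξ) - Q c) ξ) ξ‖ ≤ ‖(Q (c + τ • ξ) - Q c) ξ‖ * ‖ξ‖ :=
            ((Q (c + τ • ξ) - Q c) ξ).le_opNorm ξ
        _ ≤ (‖Q (c + τ • ξ) - Q c‖ * ‖ξ‖) * ‖ξ‖ := by
            exact mul_le_mul_of_nonneg_right ((Q (c + τ • ξ) - Q c).le_opNorm ξ) (norm_nonneg _)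
        _ ≤ (M * ‖ξ‖) * ‖ξ‖ := by
            have := hM τ hτ
            gcongr
        _ = M * ‖ξ‖ ^ 2 := by ring
    have h0 : (0:ℝ) ∈ Icc (-r) r := by constructor <;> linarith
    have := Convex.norm_image_sub_le_of_norm_hasDerivWithin_le hderiv hbound
      (convex_Icc _ _) h0 hσ
    rw [show ψ σ - ψ 0 - σ * A = ψ σ - σ * A - ψ 0 by ring]
    simpa [Real.norm_eq_abs] using this
  -- step 2 : derivative of χ
  set χ : ℝ → ℝ := fun σ => F (c + σ • ξ) + F (c + (-σ) • ξ) - 2 * F c - σ ^ 2 * A with hχ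
  have hχderiv : ∀ σ ∈ Icc (-r) r,
      HasDerivWithinAt χ (ψ σ - ψ (-σ) - 2 * σ * A) (Icc (-r) r) σ := by
    intro σ _
    have h1 := F_line_hasDerivAt hF c ξ σ
    have h2 : HasDerivAt (fun σ : ℝ => F (c + (-σ) • ξ)) (-(ψ (-σ))) σ := by
      have := (F_line_hasDerivAt hF c ξ (-σ)).comp σ (hasDerivAt_neg σ)
      simpa [Function.comp_def, hψ, mul_comm] using this
    have h3 : HasDerivAt (fun σ : ℝ => σ ^ 2 * A) (2 * σ * A) σ := by
      simpa [mul_comm] using (hasDerivAt_pow 2 σ).mul_const A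
    have := ((h1.add h2).sub (hasDerivAt_const σ (2 * F c))).sub h3
    have h4 : ψ σ + -ψ (-σ) - 0 - 2 * σ * A = ψ σ - ψ (-σ) - 2 * σ * A := by ring
    rw [← h4]
    exact this.hasDerivWithinAt
  have hχbound : ∀ σ ∈ Icc (-r) r, ‖ψ σ - ψ (-σ) - 2 * σ * A‖ ≤ 2 * (M * ‖ξ‖ ^ 2) * r := by
    intro σ hσ
    have hσ' : -σ ∈ Icc (-r) r := by constructor <;> [linarith [hσ.2]; linarith [hσ.1]]
    have e1 := step1 σ hσ
    have e2 := step1 (-σ) hσ'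
    have habs : |σ| ≤ r := abs_le.2 ⟨hσ.1, hσ.2⟩
    have : ψ σ - ψ (-σ) - 2 * σ * A = (ψ σ - ψ 0 - σ * A) - (ψ (-σ) - ψ 0 - (-σ) * A) := by ring
    rw [Real.norm_eq_abs, this]
    calc |(ψ σ - ψ 0 - σ * A) - (ψ (-σ) - ψ 0 - (-σ) * A)|
        ≤ |ψ σ - ψ 0 - σ * A| + |ψ (-σ) - ψ 0 - (-σ) * A| := abs_sub _ _
      _ ≤ (M * ‖ξ‖ ^ 2) * |σ| + (M * ‖ξ‖ ^ 2) * |(-σ)| := add_le_add e1 e2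
      _ ≤ 2 * (M * ‖ξ‖ ^ 2) * r := by
          rw [abs_neg]
          have hMξ : 0 ≤ M * ‖ξ‖ ^ 2 := by
            have h0 : (0:ℝ) ∈ Icc (-r) r := by constructor <;> linarith
            have hM0 : 0 ≤ M :=
              le_trans (norm_nonneg (Q (c + (0:ℝ) • ξ) - Q c)) (hM 0 h0)
            positivity
          nlinarith [abs_nonneg σ]
  have h0 : (0:ℝ) ∈ Icc (-r) r := by constructor <;> linarith
  have hs : s ∈ Icc (-r) r := by
    constructor
    · exact neg_abs_le s
    · exact le_abs_self s
  have := Convex.norm_image_sub_le_of_norm_hasDerivWithin_le hχderiv hχbound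
    (convex_Icc _ _) h0 hs
  have hχ0 : χ 0 = 0 := by simp [hχ]; ring
  have : ‖χ s‖ ≤ 2 * (M * ‖ξ‖ ^ 2) * r * ‖s‖ := by simpa [hχ0] using this
  calc |F (c + s • ξ) + F (c + (-s) • ξ) - 2 * F c - s ^ 2 * A| = ‖χ s‖ := by
        simp [hχ, Real.norm_eq_abs]
    _ ≤ 2 * (M * ‖ξ‖ ^ 2) * r * ‖s‖ := this
    _ = 2 * (M * ‖ξ‖ ^ 2) * (|s| * |s|) := by rw [Real.norm_eq_abs, hr]; ring
    _ = 2 * (M * ‖ξ‖ ^ 2) * s ^ 2 := by rw [abs_mul_abs_self]; ring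
  
end aux


section aux2
variable {E : Type*} [NormedAddCommGroup E] [NormedSpace ℝ E]

lemma second_fderiv_restrict (L : ℝ × E × E → ℝ) (hL : ContDiff ℝ 2 L)
    (t : ℝ) (p v₀ w : E) :
    (fderiv ℝ (fun v => fderiv ℝ (fun u => L (t, p, u)) v) v₀) w w
      = fderiv ℝ (fderiv ℝ L) (t, p, v₀) (0, 0, w) (0, 0, w) := by
  set ι : E →L[ℝ] ℝ × E × E :=
    (0 : E →L[ℝ] ℝ).prod ((0 : E →L[ℝ] E).prod (ContinuousLinearMap.id ℝ E)) with hι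
  have hinner : ∀ u : E, HasFDerivAt (fun u : E => ((t : ℝ), p, u)) ι u := by
    intro u
    exact HasFDerivAt.prodMk (hasFDerivAt_const t u) (HasFDerivAt.prodMk (hasFDerivAt_const p u) (hasFDerivAt_id u))
  have h1 : ∀ v : E, HasFDerivAt (fun u => L (t, p, u))
      ((fderiv ℝ L (t, p, v)).comp ι) v := by
    intro v
    exact ((hL.differentiable (by norm_num) (t, p, v)).hasFDerivAt).comp v (hinner v)
  set P : ((ℝ × E × E) →L[ℝ] ℝ) →L[ℝ] (E →L[ℝ] ℝ) :=
    (ContinuousLinearMap.compL ℝ E (ℝ × E × E) ℝ).flip ι with hP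
  have h1' : (fun v => fderiv ℝ (fun u => L (t, p, u)) v)
      = fun v => P (fderiv ℝ L (t, p, v)) := by
    funext v
    rw [(h1 v).fderiv]
    simp [hP]
  have hinner2 : HasFDerivAt (fun v => fderiv ℝ L (t, p, v))
      ((fderiv ℝ (fderiv ℝ L) (t, p, v₀)).comp ι) v₀ := by
    have hF' : ContDiff ℝ 1 (fderiv ℝ L) := hL.fderiv_right (by norm_num)
    exact ((hF'.differentiable (by norm_num) (t, p, v₀)).hasFDerivAt).comp v₀ (hinner v₀)
  have h2 : HasFDerivAt (fun v => P (fderiv ℝ L (t, p, v)))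
      (P.comp ((fderiv ℝ (fderiv ℝ L) (t, p, v₀)).comp ι)) v₀ :=
    (P.hasFDerivAt).comp v₀ hinner2
  rw [h1', h2.fderiv]
  simp [hP, hι]

end aux2


namespace LegendreAux

noncomputable def bump : ContDiffBump (0:ℝ) := ⟨1, 2, one_pos, one_lt_two⟩

noncomputable def ψ : ℝ → ℝ := ⇑bump
noncomputable def ψ' : ℝ → ℝ := deriv ⇑bump

lemma hψd (u : ℝ) : HasDerivAt ψ (ψ' u) u :=
  (((bump.contDiff (n := 1)).differentiable (by norm_num)) u).hasDerivAt

lemma hψc : Continuous ψ := (bump.contDiff (n := 0)).continuous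

lemma hψ'c : Continuous ψ' := by
  have h := (bump.contDiff (n := 1))
  exact h.continuous_deriv (by norm_num)

lemma hψ_nonneg (u : ℝ) : 0 ≤ ψ u := bump.nonneg

lemma hψ_le_one (u : ℝ) : ψ u ≤ 1 := bump.le_one

lemma hψ0 {u : ℝ} (hu : 2 ≤ |u|) : ψ u = 0 := by
  apply bump.zero_of_le_dist
  simpa [Real.dist_eq, bump] using hu

lemma hψ'0 {u : ℝ} (hu : 3 ≤ |u|) : ψ' u = 0 := by
  have hnot : u ∉ tsupport ⇑bump := by
    rw [bump.tsupport_eq]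
    simp only [Metric.mem_closedBall, Real.dist_eq, sub_zero]
    intro hle
    have : bump.rOut = 2 := rfl
    rw [this] at hle
    linarith
  exact Function.notMem_support.mp (fun h => hnot (support_deriv_subset h))

lemma hψ30 : ψ 3 = 0 := hψ0 (by norm_num)
lemma hψzero : ψ 0 = 1 := bump.one_of_mem_closedBall (by simp [bump])

/-- the normalization constant -/
noncomputable def K₀ : ℝ := ∫ u in (-3:ℝ)..3, ψ' u ^ 2

lemma abs_int : 1 ≤ ∫ u in (0:ℝ)..3, |ψ' u| := by
  have h1 : ∫ u in (0:ℝ)..3, ψ' u = ψ 3 - ψ 0 := by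
    apply intervalIntegral.integral_deriv_eq_sub
    · intro u _; exact ((bump.contDiff (n := 1)).differentiable (by norm_num)) u
    · exact hψ'c.intervalIntegrable _ _
  have h2 : |∫ u in (0:ℝ)..3, ψ' u| = 1 := by
    rw [h1, hψ30, hψzero]; norm_num
  calc (1:ℝ) = |∫ u in (0:ℝ)..3, ψ' u| := h2.symm
    _ ≤ ∫ u in (0:ℝ)..3, |ψ' u| :=
        intervalIntegral.abs_integral_le_integral_abs (by norm_num)

lemma K₀_pos : (1/6 : ℝ) ≤ K₀ := by
  have key : ∀ u : ℝ, 2 * (1/6) * |ψ' u| - (1/6)^2 ≤ ψ' u ^ 2 := by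
    intro u
    nlinarith [sq_nonneg (|ψ' u| - 1/6), sq_abs (ψ' u)]
  have h1 : ∫ u in (-3:ℝ)..3, (2 * (1/6) * |ψ' u| - (1/6)^2) ≤ K₀ := by
    apply intervalIntegral.integral_mono_on (by norm_num)
    · exact (((continuous_const.mul hψ'c.abs)).sub continuous_const).intervalIntegrable _ _
    · exact (hψ'c.pow 2).intervalIntegrable _ _
    · intro u _; exact key u
  have h2 : ∫ u in (-3:ℝ)..3, (2 * (1/6) * |ψ' u| - (1/6)^2)
      = 2 * (1/6) * (∫ u in (-3:ℝ)..3, |ψ' u|) - 6 * (1/6)^2 := by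
    rw [intervalIntegral.integral_sub (f := fun u => 2 * (1/6) * |ψ' u|) (((continuous_const.mul hψ'c.abs)).intervalIntegrable _ _)
      (intervalIntegrable_const), intervalIntegral.integral_const_mul,
      intervalIntegral.integral_const]
    norm_num
  have h3 : (1:ℝ) ≤ ∫ u in (-3:ℝ)..3, |ψ' u| := by
    have hsplit : ∫ u in (-3:ℝ)..3, |ψ' u|
        = (∫ u in (-3:ℝ)..0, |ψ' u|) + ∫ u in (0:ℝ)..3, |ψ' u| :=
      (intervalIntegral.integral_add_adjacent_intervals
        (hψ'c.abs.intervalIntegrable _ _) (hψ'c.abs.intervalIntegrable _ _)).symm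
    have hpos : 0 ≤ ∫ u in (-3:ℝ)..0, |ψ' u| :=
      intervalIntegral.integral_nonneg (by norm_num) (fun u _ => abs_nonneg _)
    have := abs_int
    rw [hsplit]; linarith
  rw [h2] at h1
  linarith

end LegendreAux

open LegendreAux

section claim1
variable {E : Type*} [NormedAddCommGroup E] [NormedSpace ℝ E] [CompleteSpace E]

lemma second_variation_nonneg
    (a b : ℝ) (hab : a < b)
    (L : ℝ × E × E → ℝ) (hL : ContDiff ℝ 2 L)
    (x x' : ℝ → E)
    (hx : ∀ t ∈ Set.Icc a b, HasDerivWithinAt x (x' t) (Set.Icc a b) t)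
    (hx' : ContinuousOn x' (Set.Icc a b))
    (ε : ℝ) (hε : 0 < ε)
    (hmin : ∀ y y' : ℝ → E,
      (∀ t ∈ Set.Icc a b, HasDerivWithinAt y (y' t) (Set.Icc a b) t) →
      ContinuousOn y' (Set.Icc a b) →
      y a = x a → y b = x b →
      (∀ t ∈ Set.Icc a b, ‖y t - x t‖ + ‖y' t - x' t‖ ≤ ε) →
      (∫ t in a..b, L (t, x t, x' t)) ≤ ∫ t in a..b, L (t, y t, y' t))
    (φ φ' : ℝ → E) (hφd : ∀ t, HasDerivAt φ (φ' t) t)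
    (hφ'c : Continuous φ')
    (hφa : φ a = 0) (hφb : φ b = 0)
    (Cφ : ℝ) (hCφ : ∀ t, ‖φ t‖ + ‖φ' t‖ ≤ Cφ) :
    0 ≤ ∫ t in a..b, fderiv ℝ (fderiv ℝ L)
        (t, x t, x' t) ((0:ℝ), φ t, φ' t) ((0:ℝ), φ t, φ' t) := by
  classical
  have hab' : a ≤ b := hab.le
  have huIcc : uIcc a b = Icc a b := uIcc_of_le hab'
  have hφc : Continuous φ :=
    continuous_iff_continuousAt.2 fun t => (hφd t).continuousAt
  have hxc : ContinuousOn x (Icc a b) := fun t ht => (hx t ht).continuousWithinAt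
  set c : ℝ → ℝ × E × E := fun t => (t, x t, x' t) with hc
  set ξ : ℝ → ℝ × E × E := fun t => ((0:ℝ), φ t, φ' t) with hξ
  have hccont : ContinuousOn c (Icc a b) :=
    continuousOn_id.prodMk (hxc.prodMk hx')
  have hξc : Continuous ξ :=
    continuous_const.prodMk (hφc.prodMk hφ'c)
  set Q : (ℝ × E × E) → (ℝ × E × E) →L[ℝ] (ℝ × E × E) →L[ℝ] ℝ :=
    fderiv ℝ (fderiv ℝ L) with hQ
  have hQcont : Continuous Q := (hL.fderiv_right (m := 1) (by norm_num)).continuous_fderiv (by norm_num)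
  set B : ℝ := ∫ t in a..b, Q (c t) (ξ t) (ξ t) with hB
  -- suffices to show B ≥ -ε' for every ε' > 0
  suffices hsuff : ∀ ε' > (0:ℝ), -ε' ≤ B by
    by_contra hneg
    push_neg at hneg
    have := hsuff (-B/2) (by linarith)
    linarith
  intro ε' hε'
  -- basic bounds
  have hCφ0 : 0 ≤ Cφ := le_trans (by positivity) (hCφ a)
  have hξ_bound : ∀ t, ‖ξ t‖ ≤ Cφ := by
    intro t
    have h1 := hCφ t
    have := norm_nonneg (φ t); have := norm_nonneg (φ' t)
    rw [hξ]
    simp only [Prod.norm_def, norm_zero]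
    apply max_le (by linarith)
    apply max_le <;> linarith
  -- compact set and uniform continuity
  set K : Set (ℝ × E × E) :=
    (fun p : ℝ × ℝ => c p.1 + p.2 • ξ p.1) '' ((Icc a b) ×ˢ (Icc (-1:ℝ) 1)) with hK
  have hKc : IsCompact K := by
    apply (isCompact_Icc.prod isCompact_Icc).image_of_continuousOn
    have h1 : ContinuousOn (fun p : ℝ × ℝ => c p.1) ((Icc a b) ×ˢ (Icc (-1:ℝ) 1)) :=
      hccont.comp continuousOn_fst (fun p hp => hp.1)
    have h2 : ContinuousOn (fun p : ℝ × ℝ => p.2 • ξ p.1)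
        ((Icc a b) ×ˢ (Icc (-1:ℝ) 1)) :=
      ContinuousOn.smul continuousOn_snd ((hξc.comp continuous_fst).continuousOn)
    exact h1.add h2
  set D : ℝ := 2 * Cφ ^ 2 * (b - a) + 1 with hD
  have hDpos : 0 < D := by nlinarith
  set ε₂ : ℝ := ε' / D with hε₂
  have hε₂pos : 0 < ε₂ := div_pos hε' hDpos
  have hUC : UniformContinuousOn Q K :=
    hKc.uniformContinuousOn_of_continuous hQcont.continuousOn
  obtain ⟨δ₁, hδ₁pos, hδ₁⟩ :=
    (Metric.uniformContinuousOn_iff (f := Q) (s := K)).1 hUC ε₂ hε₂pos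
  -- choice of s
  set s : ℝ := min (δ₁ / (2 * (Cφ + 1))) (min 1 (ε / (Cφ + 1))) with hs
  have hspos : 0 < s := by
    apply lt_min (by positivity) (lt_min one_pos (by positivity))
  have hs1 : s ≤ 1 := le_trans (min_le_right _ _) (min_le_left _ _)
  have hsε : s * Cφ ≤ ε := by
    have h1 : s ≤ ε / (Cφ + 1) := le_trans (min_le_right _ _) (min_le_right _ _)
    have : s * Cφ ≤ (ε / (Cφ + 1)) * Cφ := by
      apply mul_le_mul_of_nonneg_right h1 hCφ0
    calc s * Cφ ≤ (ε / (Cφ + 1)) * Cφ := this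
      _ ≤ ε := by
          rw [div_mul_eq_mul_div, div_le_iff₀ (by positivity)]
          exact mul_le_mul_of_nonneg_left (by linarith) hε.le
  have hsδ : s * Cφ < δ₁ := by
    have h1 : s ≤ δ₁ / (2 * (Cφ + 1)) := min_le_left _ _
    have : s * Cφ ≤ (δ₁ / (2 * (Cφ + 1))) * Cφ := mul_le_mul_of_nonneg_right h1 hCφ0
    calc s * Cφ ≤ (δ₁ / (2 * (Cφ + 1))) * Cφ := this
      _ < δ₁ := by
          rw [div_mul_eq_mul_div, div_lt_iff₀ (by positivity)]
          exact mul_lt_mul_of_pos_left (by linarith) hδ₁pos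
  -- membership in K
  have hmemK : ∀ t ∈ Icc a b, ∀ σ : ℝ, |σ| ≤ 1 → c t + σ • ξ t ∈ K := by
    intro t ht σ hσ
    exact ⟨(t, σ), ⟨ht, abs_le.1 hσ⟩, rfl⟩
  have hmemK0 : ∀ t ∈ Icc a b, c t ∈ K := by
    intro t ht
    have := hmemK t ht 0 (by norm_num)
    simpa using this
  -- modulus bound
  have hM : ∀ t ∈ Icc a b, ∀ σ ∈ Icc (-|s|) |s|,
      ‖Q (c t + σ • ξ t) - Q (c t)‖ ≤ ε₂ := by
    intro t ht σ hσ
    have habs : |σ| ≤ s := by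
      rw [abs_le]; rwa [abs_of_pos hspos] at hσ
    have hσ1 : |σ| ≤ 1 := le_trans habs hs1
    have hp : c t + σ • ξ t ∈ K := hmemK t ht σ hσ1
    have hq : c t ∈ K := hmemK0 t ht
    have hdist : dist (c t + σ • ξ t) (c t) < δ₁ := by
      rw [dist_eq_norm]
      simp only [add_sub_cancel_left]
      calc ‖σ • ξ t‖ = |σ| * ‖ξ t‖ := by rw [norm_smul, Real.norm_eq_abs]
        _ ≤ s * Cφ := by
            apply mul_le_mul habs (hξ_bound t) (norm_nonneg _) hspos.le
        _ < δ₁ := hsδ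
    have h9 := hδ₁ _ hp _ hq hdist
    have h10 : dist (Q (c t + σ • ξ t)) (Q (c t)) = ‖Q (c t + σ • ξ t) - Q (c t)‖ := by
      exact @dist_eq_norm _ ContinuousLinearMap.toSeminormedAddCommGroup _ _
    rw [h10] at h9
    exact h9.le
  -- pointwise Taylor bound
  have hpoint : ∀ t ∈ Icc a b,
      |L (c t + s • ξ t) + L (c t + (-s) • ξ t) - 2 * L (c t)
        - s ^ 2 * (Q (c t) (ξ t) (ξ t))| ≤ 2 * (ε₂ * Cφ ^ 2) * s ^ 2 := by
    intro t ht
    have h1 := symm_second_diff_bound hL (c t) (ξ t) s ε₂ (hM t ht)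
    calc |L (c t + s • ξ t) + L (c t + (-s) • ξ t) - 2 * L (c t)
          - s ^ 2 * (Q (c t) (ξ t) (ξ t))| ≤ 2 * (ε₂ * ‖ξ t‖ ^ 2) * s ^ 2 := h1
      _ ≤ 2 * (ε₂ * Cφ ^ 2) * s ^ 2 := by
          gcongr
          exact hξ_bound t
  -- integrability
  have hint : ∀ σ : ℝ, IntervalIntegrable (fun t => L (c t + σ • ξ t))
      MeasureTheory.volume a b := by
    intro σ
    apply ContinuousOn.intervalIntegrable
    rw [huIcc]
    exact hL.continuous.comp_continuousOn
      (hccont.add ((hξc.const_smul σ).continuousOn))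
  have hintc : IntervalIntegrable (fun t => L (c t)) MeasureTheory.volume a b := by
    apply ContinuousOn.intervalIntegrable
    rw [huIcc]
    exact hL.continuous.comp_continuousOn hccont
  have hintQ : IntervalIntegrable (fun t => Q (c t) (ξ t) (ξ t))
      MeasureTheory.volume a b := by
    apply ContinuousOn.intervalIntegrable
    rw [huIcc]
    exact ((hQcont.comp_continuousOn hccont).clm_apply hξc.continuousOn).clm_apply
      hξc.continuousOn
  -- define g
  set g : ℝ → ℝ := fun σ => ∫ t in a..b, L (c t + σ • ξ t) with hg
  have hg0 : g 0 = ∫ t in a..b, L (c t) := by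
    rw [hg]; simp
  -- integral split
  have hsplit : ∫ t in a..b, (L (c t + s • ξ t) + L (c t + (-s) • ξ t) - 2 * L (c t)
      - s ^ 2 * (Q (c t) (ξ t) (ξ t)))
      = g s + g (-s) - 2 * g 0 - s ^ 2 * B := by
    rw [intervalIntegral.integral_sub (((hint s).add (hint (-s))).sub
        (hintc.const_mul 2)) (hintQ.const_mul (s^2)),
      intervalIntegral.integral_sub ((hint s).add (hint (-s))) (hintc.const_mul 2),
      intervalIntegral.integral_add (hint s) (hint (-s)),
      intervalIntegral.integral_const_mul, intervalIntegral.integral_const_mul]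
    rw [hg0, hB]
  -- integral bound
  have hIb : |g s + g (-s) - 2 * g 0 - s ^ 2 * B| ≤ 2 * (ε₂ * Cφ ^ 2) * s ^ 2 * (b - a) := by
    rw [← hsplit]
    have := intervalIntegral.norm_integral_le_of_norm_le_const
      (C := 2 * (ε₂ * Cφ ^ 2) * s ^ 2)
      (f := fun t => L (c t + s • ξ t) + L (c t + (-s) • ξ t) - 2 * L (c t)
        - s ^ 2 * (Q (c t) (ξ t) (ξ t)))
      (a := a) (b := b) ?_
    · rw [Real.norm_eq_abs] at this
      rwa [abs_of_nonneg (by linarith : (0:ℝ) ≤ b - a)] at this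
    · intro t ht
      have ht' : t ∈ Icc a b := by
        rw [uIoc_of_le hab'] at ht
        exact ⟨ht.1.le, ht.2⟩
      rw [Real.norm_eq_abs]
      exact hpoint t ht'
  -- minimality
  have hgmin : ∀ σ : ℝ, |σ| * Cφ ≤ ε → g 0 ≤ g σ := by
    intro σ hσ
    have hgform : ∀ σ : ℝ, g σ = ∫ t in a..b, L (t, x t + σ • φ t, x' t + σ • φ' t) := by
      intro σ
      have hpt : ∀ t : ℝ, c t + σ • ξ t = (t, x t + σ • φ t, x' t + σ • φ' t) := by
        intro t
        simp [hc, hξ, Prod.ext_iff]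
      rw [hg]
      simp only [hpt]
    rw [hg0, hgform]
    have := hmin (fun t => x t + σ • φ t) (fun t => x' t + σ • φ' t)
      (fun t ht => (hx t ht).add ((hφd t).const_smul σ).hasDerivWithinAt)
      (hx'.add (hφ'c.const_smul σ).continuousOn)
      (by simp [hφa]) (by simp [hφb])
      ?_
    · exact this
    · intro t ht
      simp only [add_sub_cancel_left]
      rw [norm_smul, norm_smul, Real.norm_eq_abs]
      calc |σ| * ‖φ t‖ + |σ| * ‖φ' t‖ = |σ| * (‖φ t‖ + ‖φ' t‖) := by ring
        _ ≤ |σ| * Cφ := by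
            apply mul_le_mul_of_nonneg_left (hCφ t) (abs_nonneg σ)
        _ ≤ ε := hσ
  have h1 : g 0 ≤ g s := hgmin s (by rwa [abs_of_pos hspos])
  have h2 : g 0 ≤ g (-s) := hgmin (-s) (by rwa [abs_neg, abs_of_pos hspos])
  -- conclude
  have hBlow : s ^ 2 * B ≥ -(2 * (ε₂ * Cφ ^ 2) * s ^ 2 * (b - a)) := by
    have := abs_le.1 hIb
    linarith [this.1, this.2, h1, h2]
  have hs2 : 0 < s ^ 2 := by positivity
  have hB2 : B ≥ -(2 * (ε₂ * Cφ ^ 2) * (b - a)) := by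
    by_contra hcon
    push_neg at hcon
    have h11 : s ^ 2 * B < s ^ 2 * (-(2 * (ε₂ * Cφ ^ 2) * (b - a))) :=
      (mul_lt_mul_iff_right₀ hs2).2 hcon
    have heq : s ^ 2 * (-(2 * (ε₂ * Cφ ^ 2) * (b - a)))
        = -(2 * (ε₂ * Cφ ^ 2) * s ^ 2 * (b - a)) := by ring
    rw [heq] at h11
    linarith
  have hfin : 2 * (ε₂ * Cφ ^ 2) * (b - a) ≤ ε' := by
    rw [hε₂]
    calc 2 * (ε' / D * Cφ ^ 2) * (b - a) = ε' * (2 * Cφ ^ 2 * (b - a) / D) := by ring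
      _ ≤ ε' * 1 := by
          apply mul_le_mul_of_nonneg_left _ hε'.le
          rw [div_le_one hDpos]
          linarith
      _ = ε' := mul_one _
  linarith
end claim1

/-- **Legendre condition on a Banach space.**
If `L` is twice continuously Fréchet differentiable and `x ∈ C¹([a,b];E)` is a
local minimizer (w.r.t. the `C¹` norm) of `J[y] = ∫_a^b L(t,y,ẏ) dt` among
curves with the same endpoint values, then for every `t ∈ [a,b]` and every
`w ∈ E`, `D²_vv L(t,x(t),ẋ(t))(w,w) ≥ 0`. -/
theorem legendre_condition
    {E : Type*} [NormedAddCommGroup E] [NormedSpace ℝ E] [CompleteSpace E]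
    (a b : ℝ) (hab : a < b)
    (L : ℝ × E × E → ℝ) (hL : ContDiff ℝ 2 L)
    (x x' : ℝ → E)
    (hx : ∀ t ∈ Set.Icc a b, HasDerivWithinAt x (x' t) (Set.Icc a b) t)
    (hx' : ContinuousOn x' (Set.Icc a b))
    (hmin : ∃ ε > (0 : ℝ), ∀ y y' : ℝ → E,
      (∀ t ∈ Set.Icc a b, HasDerivWithinAt y (y' t) (Set.Icc a b) t) →
      ContinuousOn y' (Set.Icc a b) →
      y a = x a → y b = x b →
      (∀ t ∈ Set.Icc a b, ‖y t - x t‖ + ‖y' t - x' t‖ ≤ ε) →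
      (∫ t in a..b, L (t, x t, x' t)) ≤ ∫ t in a..b, L (t, y t, y' t)) :
    ∀ t ∈ Set.Icc a b, ∀ w : E,
      0 ≤ (fderiv ℝ (fun v => fderiv ℝ (fun u => L (t, x t, u)) v) (x' t)) w w := by
  classical
  obtain ⟨ε, hε, hmin⟩ := hmin
  intro t ht w
  rw [second_fderiv_restrict L hL t (x t) (x' t) w]
  have hab' : a ≤ b := hab.le
  have hxc : ContinuousOn x (Icc a b) := fun τ hτ => (hx τ hτ).continuousWithinAt
  set c : ℝ → ℝ × E × E := fun τ => (τ, x τ, x' τ) with hc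
  have hccont : ContinuousOn c (Icc a b) := continuousOn_id.prodMk (hxc.prodMk hx')
  set Q : (ℝ × E × E) → (ℝ × E × E) →L[ℝ] (ℝ × E × E) →L[ℝ] ℝ :=
    fderiv ℝ (fderiv ℝ L) with hQ
  have hQcont : Continuous Q := (hL.fderiv_right (m := 1) (by norm_num)).continuous_fderiv (by norm_num)
  set q : ℝ → ℝ := fun τ => Q (c τ) ((0:ℝ), (0:E), w) ((0:ℝ), (0:E), w) with hq
  have hqcont : ContinuousOn q (Icc a b) :=
    ((hQcont.comp_continuousOn hccont).clm_apply continuousOn_const).clm_apply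
      continuousOn_const
  show 0 ≤ q t
  -- reduce to interior points
  suffices key : ∀ t₀ ∈ Ioo a b, 0 ≤ q t₀ by
    have hclos : t ∈ closure (Ioo a b) := by rw [closure_Ioo hab.ne]; exact ht
    have hnb : (nhdsWithin t (Ioo a b)).NeBot := mem_closure_iff_nhdsWithin_neBot.1 hclos
    have htend : Filter.Tendsto q (nhdsWithin t (Ioo a b)) (nhds (q t)) :=
      (hqcont t ht).mono Ioo_subset_Icc_self
    exact ge_of_tendsto htend (eventually_nhdsWithin_of_forall key)
  intro t₀ ht₀
  by_contra hcon
  push_neg at hcon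
  set ε' : ℝ := -q t₀ / 2 with hε'def
  have hε'pos : 0 < ε' := by rw [hε'def]; linarith
  -- continuity of q at t₀
  have hqat : ContinuousAt q t₀ := hqcont.continuousAt (Icc_mem_nhds ht₀.1 ht₀.2)
  obtain ⟨δ, hδpos, hδ⟩ := Metric.continuousAt_iff.1 hqat ε' hε'pos
  -- bounds
  obtain ⟨Mf', hMf'⟩ := (bump.hasCompactSupport.deriv).exists_bound_of_continuous hψ'c
  have hMf'0 : 0 ≤ Mf' := le_trans (norm_nonneg _) (hMf' 0)
  have hQc : ContinuousOn (fun τ => Q (c τ)) (Icc a b) := hQcont.comp_continuousOn hccont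
  have hMQex : ∃ MQ : ℝ, ∀ τ ∈ Icc a b, ‖Q (c τ)‖ ≤ MQ :=
    IsCompact.exists_bound_of_continuousOn
      (E := (ℝ × E × E) →L[ℝ] (ℝ × E × E) →L[ℝ] ℝ)
      (isCompact_Icc : IsCompact (Icc a b)) hQc
  obtain ⟨MQ, hMQ⟩ := hMQex
  have hMQ0 : 0 ≤ MQ := le_trans (norm_nonneg (Q (c a))) (hMQ a ⟨le_refl a, hab'⟩)
  set C : ℝ := MQ * ‖w‖ ^ 2 * (2 * Mf' + 1) with hCdef
  have hC0 : 0 ≤ C := by positivity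
  -- choice of h
  set h : ℝ := min (min ((t₀ - a)/3) ((b - t₀)/3))
    (min 1 (min (δ/4) (ε' / (36 * C + 1)))) with hhdef
  have hh0 : 0 < h := by
    apply lt_min (lt_min (by linarith [ht₀.1] ; ) (by linarith [ht₀.2]))
      (lt_min one_pos (lt_min (by linarith) (by positivity)))
  have hh1 : h ≤ 1 := le_trans (min_le_right _ _) (min_le_left _ _)
  have hh3a : 3 * h ≤ t₀ - a := by
    have h9 : h ≤ (t₀ - a)/3 := le_trans (min_le_left _ _) (min_le_left _ _)
    linarith
  have hh3b : 3 * h ≤ b - t₀ := by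
    have h9 : h ≤ (b - t₀)/3 := le_trans (min_le_left _ _) (min_le_right _ _)
    linarith
  have hhδ : 3 * h < δ := by
    have h9 : h ≤ δ/4 :=
      le_trans (min_le_right _ _) (le_trans (min_le_right _ _) (min_le_left _ _))
    linarith
  have hhε' : h ≤ ε' / (36 * C + 1) :=
    le_trans (min_le_right _ _) (le_trans (min_le_right _ _) (min_le_right _ _))
  -- the localized variation
  set u : ℝ → ℝ := fun τ => (τ - t₀)/h with hu
  set φ : ℝ → E := fun τ => (h * ψ (u τ)) • w with hφ
  set φ' : ℝ → E := fun τ => ψ' (u τ) • w with hφ'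
  have hud : ∀ τ, HasDerivAt u (1/h) τ := by
    intro τ
    have h9 := ((hasDerivAt_id τ).sub_const t₀).div_const h
    simpa using h9
  have hφd : ∀ τ, HasDerivAt φ (φ' τ) τ := by
    intro τ
    have h1 : HasDerivAt (fun τ => ψ (u τ)) (ψ' (u τ) * (1/h)) τ :=
      (hψd (u τ)).comp τ (hud τ)
    have h2 : HasDerivAt (fun τ => h * ψ (u τ)) (h * (ψ' (u τ) * (1/h))) τ :=
      h1.const_mul h
    have h3 := h2.smul_const w
    have he : h * (ψ' (u τ) * (1/h)) = ψ' (u τ) := by field_simp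
    rw [he] at h3
    exact h3
  have hucont : Continuous u := by
    rw [hu]; fun_prop
  have hφ'c : Continuous φ' := (hψ'c.comp hucont).smul continuous_const
  have hua : u a ≤ -3 := by
    simp only [hu]
    rw [div_le_iff₀ hh0]
    linarith
  have hub : 3 ≤ u b := by
    simp only [hu]
    rw [le_div_iff₀ hh0]
    linarith
  have hφa : φ a = 0 := by
    have h9 : ψ (u a) = 0 := hψ0 (le_abs.2 (Or.inr (by linarith)))
    simp [hφ, h9]
  have hφb : φ b = 0 := by
    have h9 : ψ (u b) = 0 := hψ0 (le_abs.2 (Or.inl (by linarith)))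
    simp [hφ, h9]
  set Cφ : ℝ := h * ‖w‖ + Mf' * ‖w‖ with hCφdef
  have hCφ : ∀ τ, ‖φ τ‖ + ‖φ' τ‖ ≤ Cφ := by
    intro τ
    have h1 : |h * ψ (u τ)| ≤ h := by
      rw [abs_mul, abs_of_pos hh0, abs_of_nonneg (hψ_nonneg _)]
      calc h * ψ (u τ) ≤ h * 1 := mul_le_mul_of_nonneg_left (hψ_le_one _) hh0.le
        _ = h := mul_one h
    have h2 : |ψ' (u τ)| ≤ Mf' := by
      have h9 := hMf' (u τ); rwa [Real.norm_eq_abs] at h9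
    have e1 : ‖φ τ‖ = |h * ψ (u τ)| * ‖w‖ := by
      rw [hφ]; simp only; rw [norm_smul, Real.norm_eq_abs]
    have e2 : ‖φ' τ‖ = |ψ' (u τ)| * ‖w‖ := by
      rw [hφ']; simp only; rw [norm_smul, Real.norm_eq_abs]
    rw [e1, e2, hCφdef]
    exact add_le_add (mul_le_mul_of_nonneg_right h1 (norm_nonneg w))
      (mul_le_mul_of_nonneg_right h2 (norm_nonneg w))
  -- second variation is nonnegative
  set G : ℝ → ℝ := fun τ => Q (c τ) ((0:ℝ), φ τ, φ' τ) ((0:ℝ), φ τ, φ' τ) with hG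
  have hB0 : 0 ≤ ∫ τ in a..b, G τ :=
    second_variation_nonneg a b hab L hL x x' hx hx' ε hε hmin φ φ' hφd hφ'c hφa hφb
      Cφ hCφ
  -- localization
  set m1 : ℝ := t₀ - 3*h with hm1
  set m2 : ℝ := t₀ + 3*h with hm2
  have ham1 : a ≤ m1 := by rw [hm1]; linarith
  have hm2b : m2 ≤ b := by rw [hm2]; linarith
  have hm12 : m1 ≤ m2 := by rw [hm1, hm2]; linarith
  have hφc : Continuous φ := continuous_iff_continuousAt.2 fun τ => (hφd τ).continuousAt
  have hξc : Continuous (fun τ => (((0:ℝ), φ τ, φ' τ) : ℝ × E × E)) :=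
    continuous_const.prodMk (hφc.prodMk hφ'c)
  have hGcont : ContinuousOn G (Icc a b) :=
    ((hQcont.comp_continuousOn hccont).clm_apply hξc.continuousOn).clm_apply
      hξc.continuousOn
  have hGint : ∀ c1 d1 : ℝ, uIcc c1 d1 ⊆ Icc a b →
      IntervalIntegrable G MeasureTheory.volume c1 d1 :=
    fun c1 d1 hsub => (hGcont.mono hsub).intervalIntegrable
  have hG0 : ∀ τ, τ ≤ m1 ∨ m2 ≤ τ → G τ = 0 := by
    intro τ hτ
    have h3u : 3 ≤ |u τ| := by
      rcases hτ with hτ | hτ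
      · apply le_abs.2 (Or.inr _)
        simp only [hu]
        rw [neg_div', le_div_iff₀ hh0]
        rw [hm1] at hτ
        linarith
      · apply le_abs.2 (Or.inl _)
        simp only [hu]
        rw [le_div_iff₀ hh0]
        rw [hm2] at hτ
        linarith
    have hψu : ψ (u τ) = 0 := hψ0 (le_trans (by norm_num) h3u)
    have hψ'u : ψ' (u τ) = 0 := hψ'0 h3u
    have hφ0 : φ τ = 0 := by simp [hφ, hψu]
    have hφ'0 : φ' τ = 0 := by simp [hφ', hψ'u]
    rw [hG]
    simp only [hφ0, hφ'0]
    have hz : (((0:ℝ), (0:E), (0:E)) : ℝ × E × E) = 0 := rfl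
    rw [hz]
    simp
  have hsub1 : uIcc a m1 ⊆ Icc a b := by
    rw [uIcc_of_le ham1]; exact Icc_subset_Icc le_rfl (le_trans hm12 hm2b)
  have hsub2 : uIcc m1 b ⊆ Icc a b := by
    rw [uIcc_of_le (le_trans hm12 hm2b)]; exact Icc_subset_Icc ham1 le_rfl
  have hsub3 : uIcc m1 m2 ⊆ Icc a b := by
    rw [uIcc_of_le hm12]; exact Icc_subset_Icc ham1 hm2b
  have hsub4 : uIcc m2 b ⊆ Icc a b := by
    rw [uIcc_of_le hm2b]; exact Icc_subset_Icc (le_trans ham1 hm12) le_rfl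
  have hz1 : (∫ τ in a..m1, G τ) = 0 := by
    have h9 : EqOn G 0 (uIcc a m1) := by
      intro τ hτ
      rw [uIcc_of_le ham1] at hτ
      exact hG0 τ (Or.inl hτ.2)
    rw [intervalIntegral.integral_congr h9]
    simp
  have hz2 : (∫ τ in m2..b, G τ) = 0 := by
    have h9 : EqOn G 0 (uIcc m2 b) := by
      intro τ hτ
      rw [uIcc_of_le hm2b] at hτ
      exact hG0 τ (Or.inr hτ.1)
    rw [intervalIntegral.integral_congr h9]
    simp
  have hsplit : (∫ τ in a..b, G τ) = ∫ τ in m1..m2, G τ := by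
    have e1 := intervalIntegral.integral_add_adjacent_intervals
      (hGint a m1 hsub1) (hGint m1 b hsub2)
    have e2 := intervalIntegral.integral_add_adjacent_intervals
      (hGint m1 m2 hsub3) (hGint m2 b hsub4)
    rw [← e1, hz1, zero_add, ← e2, hz2, add_zero]
  -- pointwise upper bound on the support
  set A : ℝ := q t₀ + ε' with hA
  have hAneg : A = -ε' := by rw [hA, hε'def]; ring
  have hqle : ∀ τ ∈ Icc m1 m2, q τ ≤ A := by
    intro τ hτ
    have hdist : dist τ t₀ < δ := by
      rw [Real.dist_eq]
      have h9 : |τ - t₀| ≤ 3*h := by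
        rw [abs_le]
        rw [hm1] at hτ; rw [hm2] at hτ
        constructor <;> [linarith [hτ.1]; linarith [hτ.2]]
      linarith
    have h9 := hδ hdist
    rw [Real.dist_eq] at h9
    have h10 := (abs_lt.1 h9).2
    rw [hA]; linarith
  set W : ℝ := MQ * ‖w‖^2 with hW
  have hW0 : 0 ≤ W := by positivity
  have hpt : ∀ τ ∈ Icc m1 m2, G τ ≤ ψ' (u τ)^2 * A + C * h := by
    intro τ hτ
    have hτab : τ ∈ Icc a b := ⟨le_trans ham1 hτ.1, le_trans hτ.2 hm2b⟩
    set e₂ : ℝ × E × E := ((0:ℝ), w, (0:E)) with he₂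
    set e₃ : ℝ × E × E := ((0:ℝ), (0:E), w) with he₃
    have hξdecomp : (((0:ℝ), φ τ, φ' τ) : ℝ × E × E)
        = (h * ψ (u τ)) • e₂ + ψ' (u τ) • e₃ := by
      rw [he₂, he₃, hφ, hφ']
      simp [Prod.ext_iff]
    set X : ℝ := h * ψ (u τ) with hX
    set Y : ℝ := ψ' (u τ) with hY
    have hexp : G τ = X^2 * (Q (c τ) e₂ e₂)
        + X * Y * (Q (c τ) e₂ e₃)
        + Y * X * (Q (c τ) e₃ e₂)
        + Y^2 * (Q (c τ) e₃ e₃) := by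
      rw [hG]
      simp only
      rw [hξdecomp]
      simp only [map_add, map_smul, ContinuousLinearMap.add_apply,
        ContinuousLinearMap.coe_smul', Pi.smul_apply, smul_eq_mul]
      ring
    have hqτ : Q (c τ) e₃ e₃ = q τ := rfl
    have hnw : ∀ p : ℝ × E × E, p = e₂ ∨ p = e₃ → ‖p‖ ≤ ‖w‖ := by
      intro p hp
      rcases hp with hp | hp <;> rw [hp]
      · rw [he₂]
        simp only [Prod.norm_def, norm_zero]
        apply max_le (norm_nonneg w)
        apply max_le le_rfl (norm_nonneg w)
      · rw [he₃]
        simp only [Prod.norm_def, norm_zero]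
        apply max_le (norm_nonneg w)
        apply max_le (norm_nonneg w) le_rfl
    have hQb : ∀ p1 p2 : ℝ × E × E, ‖p1‖ ≤ ‖w‖ → ‖p2‖ ≤ ‖w‖ →
        |Q (c τ) p1 p2| ≤ W := by
      intro p1 p2 h1 h2
      have b1 : |Q (c τ) p1 p2| ≤ ‖Q (c τ) p1‖ * ‖p2‖ := by
        have := (Q (c τ) p1).le_opNorm p2
        rwa [Real.norm_eq_abs] at this
      have b2 : ‖Q (c τ) p1‖ ≤ ‖Q (c τ)‖ * ‖p1‖ := (Q (c τ)).le_opNorm p1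
      have b3 : ‖Q (c τ)‖ ≤ MQ := hMQ τ hτab
      rw [hW]
      calc |Q (c τ) p1 p2| ≤ ‖Q (c τ) p1‖ * ‖p2‖ := b1
        _ ≤ (‖Q (c τ)‖ * ‖p1‖) * ‖p2‖ :=
            mul_le_mul_of_nonneg_right b2 (norm_nonneg _)
        _ ≤ (MQ * ‖w‖) * ‖w‖ := by
            apply mul_le_mul _ h2 (norm_nonneg _) (by positivity)
            exact mul_le_mul b3 h1 (norm_nonneg _) hMQ0
        _ = MQ * ‖w‖^2 := by ring
    have h22 := hQb e₂ e₂ (hnw _ (Or.inl rfl)) (hnw _ (Or.inl rfl))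
    have h23 := hQb e₂ e₃ (hnw _ (Or.inl rfl)) (hnw _ (Or.inr rfl))
    have h32 := hQb e₃ e₂ (hnw _ (Or.inr rfl)) (hnw _ (Or.inl rfl))
    have hX0 : 0 ≤ X := by
      rw [hX]; exact mul_nonneg hh0.le (hψ_nonneg _)
    have hXh : X ≤ h := by
      rw [hX]
      calc h * ψ (u τ) ≤ h * 1 := mul_le_mul_of_nonneg_left (hψ_le_one _) hh0.le
        _ = h := mul_one h
    have hYb : |Y| ≤ Mf' := by
      rw [hY]
      have h9 := hMf' (u τ); rwa [Real.norm_eq_abs] at h9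
    have hX2h : X^2 ≤ h := by
      calc X^2 = X * X := sq X
        _ ≤ h * h := mul_le_mul hXh hXh hX0 hh0.le
        _ ≤ h * 1 := mul_le_mul_of_nonneg_left hh1 hh0.le
        _ = h := mul_one h
    have b1 : X^2 * (Q (c τ) e₂ e₂) ≤ h * W := by
      have i1 : Q (c τ) e₂ e₂ ≤ W := le_trans (le_abs_self _) h22
      calc X^2 * (Q (c τ) e₂ e₂) ≤ X^2 * W :=
            mul_le_mul_of_nonneg_left i1 (sq_nonneg X)
        _ ≤ h * W := mul_le_mul_of_nonneg_right hX2h hW0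
    have b2 : X * Y * (Q (c τ) e₂ e₃) ≤ h * Mf' * W := by
      calc X * Y * (Q (c τ) e₂ e₃) ≤ |X * Y * (Q (c τ) e₂ e₃)| := le_abs_self _
        _ = |X| * |Y| * |Q (c τ) e₂ e₃| := by rw [abs_mul, abs_mul]
        _ ≤ h * Mf' * W := by
            rw [abs_of_nonneg hX0]
            have := abs_nonneg Y
            have := abs_nonneg (Q (c τ) e₂ e₃)
            apply mul_le_mul _ h23 (abs_nonneg _) (by positivity)
            exact mul_le_mul hXh hYb (abs_nonneg _) hh0.le
    have b3 : Y * X * (Q (c τ) e₃ e₂) ≤ h * Mf' * W := by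
      calc Y * X * (Q (c τ) e₃ e₂) ≤ |Y * X * (Q (c τ) e₃ e₂)| := le_abs_self _
        _ = |Y| * |X| * |Q (c τ) e₃ e₂| := by rw [abs_mul, abs_mul]
        _ ≤ Mf' * h * W := by
            rw [abs_of_nonneg hX0]
            apply mul_le_mul _ h32 (abs_nonneg _) (by positivity)
            exact mul_le_mul hYb hXh hX0 hMf'0
        _ = h * Mf' * W := by ring
    have hmain : Y^2 * q τ ≤ Y^2 * A :=
      mul_le_mul_of_nonneg_left (hqle τ hτ) (sq_nonneg Y)
    have hCh : h * W + (h * Mf' * W + h * Mf' * W) = C * h := by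
      rw [hCdef, hW]; ring
    rw [hexp, hqτ]
    have hgoal : Y^2 * A + C * h = Y^2 * A + (h * W + (h * Mf' * W + h * Mf' * W)) := by
      rw [hCh]
    rw [hY] at *
    linarith [b1, b2, b3, hmain, hCh]
  -- bound the integral
  have hIψ : (∫ τ in m1..m2, ψ' (u τ)^2) = h * K₀ := by
    have e0 : (∫ τ in m1..m2, ψ' (u τ)^2)
        = ∫ τ in m1..m2, (fun v => ψ' (v/h)^2) (τ - t₀) := by
      apply intervalIntegral.integral_congr
      intro τ _
      simp only [hu]
    rw [e0, intervalIntegral.integral_comp_sub_right (fun v => ψ' (v/h)^2) t₀]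
    rw [show m1 - t₀ = -(3*h) by rw [hm1]; ring, show m2 - t₀ = 3*h by rw [hm2]; ring]
    rw [intervalIntegral.integral_comp_div (fun v => ψ' v^2) hh0.ne']
    rw [show -(3*h)/h = (-3 : ℝ) by field_simp, show (3*h)/h = (3:ℝ) by field_simp]
    rw [smul_eq_mul]
    rfl
  have hRint : IntervalIntegrable (fun τ => ψ' (u τ)^2 * A + C * h)
      MeasureTheory.volume m1 m2 := by
    apply Continuous.intervalIntegrable
    exact (((hψ'c.comp hucont).pow 2).mul continuous_const).add continuous_const
  have hIbound : (∫ τ in m1..m2, G τ) ≤ A * (h * K₀) + C * h * (6 * h) := by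
    have hle := intervalIntegral.integral_mono_on hm12 (hGint m1 m2 hsub3) hRint hpt
    have hrhs : (∫ τ in m1..m2, (ψ' (u τ)^2 * A + C * h))
        = (∫ τ in m1..m2, ψ' (u τ)^2) * A + (C * h) * (m2 - m1) := by
      rw [intervalIntegral.integral_add _ intervalIntegrable_const]
      · rw [intervalIntegral.integral_mul_const, intervalIntegral.integral_const,
          smul_eq_mul]
        ring
      · apply Continuous.intervalIntegrable
        exact ((hψ'c.comp hucont).pow 2).mul continuous_const
    rw [hrhs, hIψ] at hle
    have hm21 : m2 - m1 = 6 * h := by rw [hm1, hm2]; ring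
    rw [hm21] at hle
    calc (∫ τ in m1..m2, G τ) ≤ (h * K₀) * A + (C * h) * (6 * h) := hle
      _ = A * (h * K₀) + C * h * (6 * h) := by ring
  -- final contradiction
  have hchain : 0 ≤ A * (h * K₀) + C * h * (6 * h) := by
    rw [hsplit] at hB0
    linarith [hB0, hIbound]
  rw [hAneg] at hchain
  have hd : ε' * K₀ ≤ 6 * C * h := by
    have e9 : (6 * C * h) * h - (ε' * K₀) * h = -ε' * (h * K₀) + C * h * (6 * h) := by
      ring
    have h2 : (ε' * K₀) * h ≤ (6 * C * h) * h := by linarith [hchain, e9]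
    exact le_of_mul_le_mul_right h2 hh0
  have hlow : ε' * (1/6) ≤ ε' * K₀ := mul_le_mul_of_nonneg_left K₀_pos hε'pos.le
  have hup : 6 * C * h ≤ 6 * C * (ε' / (36 * C + 1)) := by
    apply mul_le_mul_of_nonneg_left hhε' (by positivity)
  have hfinal : 6 * C * (ε' / (36 * C + 1)) < ε' * (1/6) := by
    have h36 : (0:ℝ) < 36*C+1 := by linarith
    rw [← mul_div_assoc, show ε' * (1/6) = ε' / 6 by ring]
    rw [div_lt_div_iff₀ h36 (by norm_num : (0:ℝ) < 6)]
    have e9 : ε' * (36 * C + 1) - 6 * C * ε' * 6 = ε' := by ring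
    linarith [hε'pos, e9]
  linarith [hlow, hd, hup, hfinal]
end

section
/- Let E be a real Banach space, a < b, and L : ℝ × E × E → ℝ twice continuously Fréchet differentiable. Then for every x, h ∈ C¹([a,b];E), the real function s ↦ ∫_a^b L(t, x(t) + s·h(t), ẋ(t) + s·ḣ(t)) dt is twice differentiable at s = 0, and its second derivative there equals ∫_a^b [ D²_vvL(t,x(t),ẋ(t))(ḣ(t),ḣ(t)) + 2·D²_vxL(t,x(t),ẋ(t))(ḣ(t),h(t)) + D²_xxL(t,x(t),ẋ(t))(h(t),h(t)) ] dt. -/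
open MeasureTheory Set ContinuousLinearMap

section AuxSecondVariation

/-- Differentiation under the interval integral sign, for jointly continuous data. -/
theorem hasDerivAt_integral_param {F F' : ℝ → ℝ → ℝ} {a b : ℝ} (hab : a ≤ b)
    (hF : ContinuousOn (fun p : ℝ × ℝ => F p.1 p.2) (univ ×ˢ Icc a b))
    (hF' : ContinuousOn (fun p : ℝ × ℝ => F' p.1 p.2) (univ ×ˢ Icc a b))
    (hd : ∀ s : ℝ, ∀ t ∈ Icc a b, HasDerivAt (fun s => F s t) (F' s t) s) (s₀ : ℝ) :
    HasDerivAt (fun s => ∫ t in a..b, F s t) (∫ t in a..b, F' s₀ t) s₀ := by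
  have hsub : Set.uIoc a b ⊆ Icc a b := by
    rw [Set.uIoc_of_le hab]; exact Set.Ioc_subset_Icc_self
  have hFs : ∀ s, ContinuousOn (fun t => F s t) (Icc a b) := fun s =>
    hF.comp (continuous_const.prodMk continuous_id).continuousOn
      (fun t ht => ⟨mem_univ _, ht⟩)
  have hF's : ∀ s, ContinuousOn (fun t => F' s t) (Icc a b) := fun s =>
    hF'.comp (continuous_const.prodMk continuous_id).continuousOn
      (fun t ht => ⟨mem_univ _, ht⟩)
  have hK : IsCompact (Icc (s₀ - 1) (s₀ + 1) ×ˢ Icc a b) :=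
    isCompact_Icc.prod isCompact_Icc
  obtain ⟨C, hC⟩ := hK.exists_bound_of_continuousOn
    (hF'.mono (Set.prod_mono (subset_univ _) subset_rfl))
  have hball : Metric.ball s₀ 1 ⊆ Icc (s₀ - 1) (s₀ + 1) := by
    rw [Real.ball_eq_Ioo]; exact Set.Ioo_subset_Icc_self
  have h := intervalIntegral.hasDerivAt_integral_of_dominated_loc_of_deriv_le
    (F := F) (F' := F') (bound := fun _ => C) (Metric.ball_mem_nhds s₀ one_pos)
    (Filter.Eventually.of_forall fun s =>
      (((hFs s).mono hsub).aestronglyMeasurable measurableSet_uIoc))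
    (((hFs s₀).mono (Set.uIcc_of_le hab).subset).intervalIntegrable)
    (((hF's s₀).mono hsub).aestronglyMeasurable measurableSet_uIoc)
    (ae_of_all _ fun t ht s hs => hC (s, t) ⟨hball hs, hsub ht⟩)
    (intervalIntegrable_const : IntervalIntegrable (fun _ => C) MeasureTheory.volume a b)
    (ae_of_all _ fun t ht s _ => hd s t (hsub ht))
  exact h.2

variable {E : Type*} [NormedAddCommGroup E] [NormedSpace ℝ E]

/-- Inclusion `u ↦ (0,0,u)` as a continuous linear map. -/
noncomputable def Jincl (E : Type*) [NormedAddCommGroup E] [NormedSpace ℝ E] :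
    E →L[ℝ] ℝ × E × E :=
  (0 : E →L[ℝ] ℝ).prod ((0 : E →L[ℝ] E).prod (ContinuousLinearMap.id ℝ E))

/-- Inclusion `u ↦ (0,u,0)` as a continuous linear map. -/
noncomputable def Kincl (E : Type*) [NormedAddCommGroup E] [NormedSpace ℝ E] :
    E →L[ℝ] ℝ × E × E :=
  (0 : E →L[ℝ] ℝ).prod ((ContinuousLinearMap.id ℝ E).prod (0 : E →L[ℝ] E))

@[simp] lemma Jincl_apply (u : E) : Jincl E u = ((0 : ℝ), (0 : E), u) := rfl
@[simp] lemma Kincl_apply (u : E) : Kincl E u = ((0 : ℝ), u, (0 : E)) := rfl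

lemma hasFDerivAt_inclV (t₀ : ℝ) (y : E) (v₀ : E) :
    HasFDerivAt (fun u : E => (t₀, y, u)) (Jincl E) v₀ :=
  (hasFDerivAt_const t₀ v₀).prodMk ((hasFDerivAt_const y v₀).prodMk (hasFDerivAt_id v₀))

lemma hasFDerivAt_inclX (t₀ : ℝ) (v : E) (y₀ : E) :
    HasFDerivAt (fun z : E => (t₀, z, v)) (Kincl E) y₀ :=
  (hasFDerivAt_const t₀ y₀).prodMk ((hasFDerivAt_id y₀).prodMk (hasFDerivAt_const v y₀))

variable {L : ℝ × E × E → ℝ}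

lemma fderiv_inner_v (hL : ContDiff ℝ 2 L) (t₀ : ℝ) (y v₀ : E) :
    fderiv ℝ (fun u => L (t₀, y, u)) v₀ = (fderiv ℝ L (t₀, y, v₀)).comp (Jincl E) :=
  (((hL.differentiable two_ne_zero (t₀, y, v₀)).hasFDerivAt).comp v₀
    (hasFDerivAt_inclV t₀ y v₀)).fderiv

lemma fderiv_inner_x (hL : ContDiff ℝ 2 L) (t₀ : ℝ) (y₀ v : E) :
    fderiv ℝ (fun z => L (t₀, z, v)) y₀ = (fderiv ℝ L (t₀, y₀, v)).comp (Kincl E) :=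
  (((hL.differentiable two_ne_zero (t₀, y₀, v)).hasFDerivAt).comp y₀
    (hasFDerivAt_inclX t₀ v y₀)).fderiv

lemma contDiff_one_fderiv (hL : ContDiff ℝ 2 L) : ContDiff ℝ 1 (fderiv ℝ L) :=
  hL.fderiv_right (by norm_num)

lemma outer_helper (hL : ContDiff ℝ 2 L) {ι : E → ℝ × E × E} {Kin : E →L[ℝ] ℝ × E × E}
    (hι : ∀ y, HasFDerivAt ι Kin y) (Jr : E →L[ℝ] ℝ × E × E) {g : E → E →L[ℝ] ℝ}
    (hg : g = fun y => (fderiv ℝ L (ι y)).comp Jr) (y₀ u v : E) :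
    (fderiv ℝ g y₀) u v = fderiv ℝ (fderiv ℝ L) (ι y₀) (Kin u) (Jr v) := by
  have hD : HasFDerivAt (fderiv ℝ L) (fderiv ℝ (fderiv ℝ L) (ι y₀)) (ι y₀) :=
    ((contDiff_one_fderiv hL).differentiable one_ne_zero _).hasFDerivAt
  have h1 : HasFDerivAt (fun y => fderiv ℝ L (ι y))
      ((fderiv ℝ (fderiv ℝ L) (ι y₀)).comp Kin) y₀ := hD.comp y₀ (hι y₀)
  have h2 : HasFDerivAt g
      (((compL ℝ E (ℝ × E × E) ℝ).flip Jr).comp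
        ((fderiv ℝ (fderiv ℝ L) (ι y₀)).comp Kin)) y₀ := by
    rw [hg]
    exact (((compL ℝ E (ℝ × E × E) ℝ).flip Jr).hasFDerivAt).comp y₀ h1
  rw [h2.fderiv]
  simp [ContinuousLinearMap.comp_apply, ContinuousLinearMap.flip_apply]

lemma snd_vv (hL : ContDiff ℝ 2 L) (t₀ : ℝ) (y₀ v₀ v₁ v₂ : E) :
    (fderiv ℝ (fun v => fderiv ℝ (fun u => L (t₀, y₀, u)) v) v₀) v₁ v₂ =
      fderiv ℝ (fderiv ℝ L) (t₀, y₀, v₀) (Jincl E v₁) (Jincl E v₂) :=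
  outer_helper hL (fun y => hasFDerivAt_inclV t₀ y₀ y) (Jincl E)
    (funext fun v => fderiv_inner_v hL t₀ y₀ v) v₀ v₁ v₂

lemma snd_vx (hL : ContDiff ℝ 2 L) (t₀ : ℝ) (y₀ v₀ u v : E) :
    (fderiv ℝ (fun y => fderiv ℝ (fun z => L (t₀, y, z)) v₀) y₀) u v =
      fderiv ℝ (fderiv ℝ L) (t₀, y₀, v₀) (Kincl E u) (Jincl E v) :=
  outer_helper hL (fun y => hasFDerivAt_inclX t₀ v₀ y) (Jincl E)
    (funext fun y => fderiv_inner_v hL t₀ y v₀) y₀ u v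

lemma snd_xx (hL : ContDiff ℝ 2 L) (t₀ : ℝ) (y₀ v₀ u u' : E) :
    (fderiv ℝ (fun y => fderiv ℝ (fun z => L (t₀, z, v₀)) y) y₀) u u' =
      fderiv ℝ (fderiv ℝ L) (t₀, y₀, v₀) (Kincl E u) (Kincl E u') :=
  outer_helper hL (fun y => hasFDerivAt_inclX t₀ v₀ y) (Kincl E)
    (funext fun y => fderiv_inner_x hL t₀ y v₀) y₀ u u'

lemma snd_decomp (hL : ContDiff ℝ 2 L) (t₀ : ℝ) (y₀ v₀ u v : E) :
    fderiv ℝ (fderiv ℝ L) (t₀, y₀, v₀) ((0 : ℝ), u, v) ((0 : ℝ), u, v) =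
      (fderiv ℝ (fun w => fderiv ℝ (fun z => L (t₀, y₀, z)) w) v₀) v v
        + 2 * (fderiv ℝ (fun y => fderiv ℝ (fun z => L (t₀, y, z)) v₀) y₀) u v
        + (fderiv ℝ (fun y => fderiv ℝ (fun z => L (t₀, z, v₀)) y) y₀) u u := by
  have hKJ : (((0 : ℝ), u, v) : ℝ × E × E) = Kincl E u + Jincl E v := by
    simp [Prod.ext_iff]
  have hsymm : fderiv ℝ (fderiv ℝ L) (t₀, y₀, v₀) (Jincl E v) (Kincl E u) =
      fderiv ℝ (fderiv ℝ L) (t₀, y₀, v₀) (Kincl E u) (Jincl E v) :=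
    second_derivative_symmetric (fun y => (hL.differentiable two_ne_zero y).hasFDerivAt)
      (((contDiff_one_fderiv hL).differentiable one_ne_zero _).hasFDerivAt) _ _
  rw [snd_vv hL, snd_vx hL, snd_xx hL, hKJ]
  simp only [map_add, ContinuousLinearMap.add_apply]
  linarith [hsymm]

end AuxSecondVariation

/-- **Second variation formula.**
Let `L` be twice continuously Fréchet differentiable. For every
`x, h ∈ C¹([a,b];E)`, the function
`φ(s) = ∫_a^b L(t, x(t) + s•h(t), ẋ(t) + s•ḣ(t)) dt` is twice differentiable
at `s = 0` (it is differentiable near `0` and its derivative is differentiable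
at `0`), and its second derivative at `0` equals
`∫_a^b [D²_vv L(ḣ,ḣ) + 2 D²_vx L(ḣ,h) + D²_xx L(h,h)] dt`
evaluated along `(t, x(t), ẋ(t))`. -/
theorem second_variation
    {E : Type*} [NormedAddCommGroup E] [NormedSpace ℝ E] [CompleteSpace E]
    (a b : ℝ) (hab : a < b)
    (L : ℝ × E × E → ℝ) (hL : ContDiff ℝ 2 L)
    (x x' h h' : ℝ → E)
    (hx : ∀ t ∈ Set.Icc a b, HasDerivWithinAt x (x' t) (Set.Icc a b) t)
    (hx' : ContinuousOn x' (Set.Icc a b))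
    (hh : ∀ t ∈ Set.Icc a b, HasDerivWithinAt h (h' t) (Set.Icc a b) t)
    (hh' : ContinuousOn h' (Set.Icc a b)) :
    (∀ᶠ s in nhds (0 : ℝ), DifferentiableAt ℝ
        (fun s : ℝ => ∫ t in a..b, L (t, x t + s • h t, x' t + s • h' t)) s) ∧
    HasDerivAt
      (deriv (fun s : ℝ => ∫ t in a..b, L (t, x t + s • h t, x' t + s • h' t)))
      (∫ t in a..b,
        (fderiv ℝ (fun v => fderiv ℝ (fun u => L (t, x t, u)) v) (x' t)) (h' t) (h' t)
          + 2 * (fderiv ℝ (fun y => fderiv ℝ (fun u => L (t, y, u)) (x' t)) (x t)) (h t) (h' t)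
          + (fderiv ℝ (fun y => fderiv ℝ (fun z => L (t, z, x' t)) y) (x t)) (h t) (h t))
      0 := by
  have hab' : a ≤ b := hab.le
  have hxc : ContinuousOn x (Set.Icc a b) := fun t ht => (hx t ht).continuousWithinAt
  have hhc : ContinuousOn h (Set.Icc a b) := fun t ht => (hh t ht).continuousWithinAt
  have hsnd : ∀ p : ℝ × ℝ, p ∈ (univ ×ˢ Icc a b : Set (ℝ × ℝ)) → p.2 ∈ Set.Icc a b :=
    fun p hp => hp.2
  -- joint continuity of the parametrized curve in `ℝ × E × E`
  have hγ : ContinuousOn (fun p : ℝ × ℝ => ((p.2, x p.2 + p.1 • h p.2,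
      x' p.2 + p.1 • h' p.2) : ℝ × E × E)) (univ ×ˢ Icc a b) := by
    apply ContinuousOn.prodMk continuous_snd.continuousOn
    apply ContinuousOn.prodMk
    · exact (hxc.comp continuous_snd.continuousOn hsnd).add
        ((continuous_fst.continuousOn).smul (hhc.comp continuous_snd.continuousOn hsnd))
    · exact (hx'.comp continuous_snd.continuousOn hsnd).add
        ((continuous_fst.continuousOn).smul (hh'.comp continuous_snd.continuousOn hsnd))
  have hwS : ContinuousOn (fun p : ℝ × ℝ => (((0 : ℝ), h p.2, h' p.2) : ℝ × E × E))
      (univ ×ˢ Icc a b) :=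
    (continuousOn_const.prodMk ((hhc.prodMk hh'))).comp continuous_snd.continuousOn hsnd
  -- the `s`-derivative of the curve
  have hcurve : ∀ (s t : ℝ), HasDerivAt
      (fun s : ℝ => ((t, x t + s • h t, x' t + s • h' t) : ℝ × E × E))
      (((0 : ℝ), h t, h' t)) s := by
    intro s t
    refine (hasDerivAt_const s t).prodMk (HasDerivAt.prodMk ?_ ?_)
    · simpa using ((hasDerivAt_id s).smul_const (h t)).const_add (x t)
    · simpa using ((hasDerivAt_id s).smul_const (h' t)).const_add (x' t)
  have hd1 : ∀ (s t : ℝ), HasDerivAt (fun s : ℝ => L (t, x t + s • h t, x' t + s • h' t))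
      (fderiv ℝ L (t, x t + s • h t, x' t + s • h' t) ((0 : ℝ), h t, h' t)) s := fun s t =>
    ((hL.differentiable two_ne_zero _).hasFDerivAt).comp_hasDerivAt s (hcurve s t)
  have hd2 : ∀ (s t : ℝ), HasDerivAt
      (fun s : ℝ => fderiv ℝ L (t, x t + s • h t, x' t + s • h' t) ((0 : ℝ), h t, h' t))
      (fderiv ℝ (fderiv ℝ L) (t, x t + s • h t, x' t + s • h' t)
        ((0 : ℝ), h t, h' t) ((0 : ℝ), h t, h' t)) s := by
    intro s t
    have h1 : HasDerivAt (fun s : ℝ => fderiv ℝ L (t, x t + s • h t, x' t + s • h' t))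
        (fderiv ℝ (fderiv ℝ L) (t, x t + s • h t, x' t + s • h' t) ((0 : ℝ), h t, h' t)) s :=
      (((contDiff_one_fderiv hL).differentiable one_ne_zero _).hasFDerivAt).comp_hasDerivAt s
        (hcurve s t)
    simpa using h1.clm_apply (hasDerivAt_const s (((0 : ℝ), h t, h' t) : ℝ × E × E))
  -- continuity of the integrands
  have hFc : ContinuousOn (fun p : ℝ × ℝ =>
      L (p.2, x p.2 + p.1 • h p.2, x' p.2 + p.1 • h' p.2)) (univ ×ˢ Icc a b) :=
    hL.continuous.comp_continuousOn hγ
  have hF'c : ContinuousOn (fun p : ℝ × ℝ =>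
      fderiv ℝ L (p.2, x p.2 + p.1 • h p.2, x' p.2 + p.1 • h' p.2) ((0 : ℝ), h p.2, h' p.2))
      (univ ×ˢ Icc a b) :=
    isBoundedBilinearMap_apply.continuous.comp_continuousOn
      (((hL.continuous_fderiv two_ne_zero).comp_continuousOn hγ).prodMk hwS)
  have hF''c : ContinuousOn (fun p : ℝ × ℝ =>
      fderiv ℝ (fderiv ℝ L) (p.2, x p.2 + p.1 • h p.2, x' p.2 + p.1 • h' p.2)
        ((0 : ℝ), h p.2, h' p.2) ((0 : ℝ), h p.2, h' p.2)) (univ ×ˢ Icc a b) := by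
    have c1 : ContinuousOn (fun p : ℝ × ℝ =>
        fderiv ℝ (fderiv ℝ L) (p.2, x p.2 + p.1 • h p.2, x' p.2 + p.1 • h' p.2))
        (univ ×ˢ Icc a b) :=
      ((contDiff_one_fderiv hL).continuous_fderiv one_ne_zero).comp_continuousOn hγ
    have c2 : ContinuousOn (fun p : ℝ × ℝ =>
        fderiv ℝ (fderiv ℝ L) (p.2, x p.2 + p.1 • h p.2, x' p.2 + p.1 • h' p.2)
          ((0 : ℝ), h p.2, h' p.2)) (univ ×ˢ Icc a b) :=
      isBoundedBilinearMap_apply.continuous.comp_continuousOn (c1.prodMk hwS)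
    exact isBoundedBilinearMap_apply.continuous.comp_continuousOn (c2.prodMk hwS)
  -- first differentiation under the integral sign
  have key1 : ∀ s₀ : ℝ, HasDerivAt
      (fun s : ℝ => ∫ t in a..b, L (t, x t + s • h t, x' t + s • h' t))
      (∫ t in a..b,
        fderiv ℝ L (t, x t + s₀ • h t, x' t + s₀ • h' t) ((0 : ℝ), h t, h' t)) s₀ :=
    fun s₀ => hasDerivAt_integral_param
      (F := fun s t => L (t, x t + s • h t, x' t + s • h' t))
      (F' := fun s t => fderiv ℝ L (t, x t + s • h t, x' t + s • h' t) ((0 : ℝ), h t, h' t))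
      hab' hFc hF'c (fun s t _ => hd1 s t) s₀
  -- second differentiation under the integral sign
  have key2 : HasDerivAt
      (fun s : ℝ => ∫ t in a..b,
        fderiv ℝ L (t, x t + s • h t, x' t + s • h' t) ((0 : ℝ), h t, h' t))
      (∫ t in a..b,
        fderiv ℝ (fderiv ℝ L) (t, x t + (0 : ℝ) • h t, x' t + (0 : ℝ) • h' t)
          ((0 : ℝ), h t, h' t) ((0 : ℝ), h t, h' t)) 0 :=
    hasDerivAt_integral_param
      (F := fun s t => fderiv ℝ L (t, x t + s • h t, x' t + s • h' t) ((0 : ℝ), h t, h' t))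
      (F' := fun s t => fderiv ℝ (fderiv ℝ L) (t, x t + s • h t, x' t + s • h' t)
        ((0 : ℝ), h t, h' t) ((0 : ℝ), h t, h' t))
      hab' hF'c hF''c (fun s t _ => hd2 s t) 0
  refine ⟨Filter.Eventually.of_forall fun s => (key1 s).differentiableAt, ?_⟩
  have hde : deriv (fun s : ℝ => ∫ t in a..b, L (t, x t + s • h t, x' t + s • h' t))
      = fun s : ℝ => ∫ t in a..b,
          fderiv ℝ L (t, x t + s • h t, x' t + s • h' t) ((0 : ℝ), h t, h' t) :=
    funext fun s => (key1 s).deriv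
  rw [hde]
  simp only [zero_smul, add_zero] at key2
  have hIeq : (∫ t in a..b, fderiv ℝ (fderiv ℝ L) (t, x t, x' t)
      ((0 : ℝ), h t, h' t) ((0 : ℝ), h t, h' t))
      = ∫ t in a..b,
        (fderiv ℝ (fun v => fderiv ℝ (fun u => L (t, x t, u)) v) (x' t)) (h' t) (h' t)
          + 2 * (fderiv ℝ (fun y => fderiv ℝ (fun u => L (t, y, u)) (x' t)) (x t)) (h t) (h' t)
          + (fderiv ℝ (fun y => fderiv ℝ (fun z => L (t, z, x' t)) y) (x t)) (h t) (h t) := by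
    simp only [snd_decomp hL]
  exact hIeq ▸ key2
end

section
/- Let a < b be real numbers and R, P : [a,b] → ℝ continuous functions. If there exists t₀ ∈ [a,b] with R(t₀) < 0, then there exists h ∈ C¹([a,b];ℝ) with h(a) = h(b) = 0 such that ∫_a^b [ R(t)·ḣ(t)² + P(t)·h(t)² ] dt < 0. -/
open intervalIntegral


lemma my_hasDerivAt_u (α L t : ℝ) :
    HasDerivAt (fun s => (s - α) * (α + L - s)) (2*α + L - 2*t) t := by
  have h := ((hasDerivAt_id t).sub_const α).fun_mul ((hasDerivAt_id t).const_sub (α + L))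
  refine h.congr_deriv ?_
  simp only [id_eq]; ring

lemma my_cont_v (α L : ℝ) : Continuous (fun s => max ((s - α) * (α + L - s)) 0) :=
  (((continuous_id.sub continuous_const)).mul (continuous_const.sub continuous_id)).max continuous_const

lemma my_hasDerivAt_h (α L t : ℝ) :
    HasDerivAt (fun s => (max ((s - α) * (α + L - s)) 0)^2)
      (2 * max ((t - α) * (α + L - t)) 0 * (2*α + L - 2*t)) t := by
  set u : ℝ → ℝ := fun s => (s - α) * (α + L - s) with hu
  have hucont : Continuous u := (continuous_id.sub continuous_const).mul (continuous_const.sub continuous_id)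
  rcases lt_trichotomy (u t) 0 with hneg | hzero | hpos
  · have hev : ∀ᶠ s in nhds t, u s < 0 :=
      (hucont.continuousAt (x := t)).eventually_lt continuousAt_const hneg
    have heq : (fun s => (max (u s) 0)^2) =ᶠ[nhds t] (fun _ => (0:ℝ)) := by
      filter_upwards [hev] with s hs
      simp [max_eq_right hs.le]
    have h2 : HasDerivAt (fun s => (max (u s) 0)^2) 0 t :=
      (hasDerivAt_const t 0).congr_of_eventuallyEq heq
    show HasDerivAt (fun s => (max (u s) 0)^2) (2 * max (u t) 0 * (2*α + L - 2*t)) t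
    simpa [max_eq_right hneg.le] using h2
  · have hO : (fun s => u s - u t) =O[nhds t] (fun s => s - t) :=
      (my_hasDerivAt_u α L t).isBigO_sub
    have hvle : ∀ s, ‖max (u s) 0‖ ≤ ‖u s - u t‖ := by
      intro s
      rw [hzero]
      have := abs_max_sub_max_le_abs (u s) 0 0
      simpa using this
    have hvO : (fun s => max (u s) 0) =O[nhds t] (fun s => s - t) :=
      (Asymptotics.IsBigO.of_bound' (Filter.Eventually.of_forall hvle)).trans hO
    have hsq : (fun s : ℝ => (s - t) * (s - t)) =o[nhds t] (fun s => s - t) := by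
      have h1 : (fun s : ℝ => s - t) =o[nhds t] (fun _ => (1:ℝ)) := by
        rw [Asymptotics.isLittleO_one_iff]
        have : Filter.Tendsto (fun s : ℝ => s - t) (nhds t) (nhds (t - t)) :=
          (continuous_id.sub continuous_const).tendsto t
        simpa using this
      simpa using h1.mul_isBigO (Asymptotics.isBigO_refl (fun s : ℝ => s - t) (nhds t))
    have hlo : (fun s => (max (u s) 0)^2) =o[nhds t] (fun s => s - t) := by
      have := (hvO.mul hvO).trans_isLittleO hsq
      simpa [pow_two] using this
    have hd0 : HasDerivAt (fun s => (max (u s) 0)^2) 0 t := by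
      rw [hasDerivAt_iff_isLittleO]
      simpa [hzero] using hlo
    have hz2 : (t - α) * (α + L - t) = 0 := hzero
    simpa [hz2] using hd0
  · have hev : ∀ᶠ s in nhds t, 0 < u s :=
      continuousAt_const.eventually_lt (hucont.continuousAt (x := t)) hpos
    have heq : (fun s => (max (u s) 0)^2) =ᶠ[nhds t] (fun s => (u s)^2) := by
      filter_upwards [hev] with s hs
      simp [max_eq_left hs.le]
    have hd : HasDerivAt (fun s => (u s)^2) (2 * u t * (2*α + L - 2*t)) t := by
      simpa using (my_hasDerivAt_u α L t).fun_pow 2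
    have := hd.congr_of_eventuallyEq heq
    show HasDerivAt (fun s => (max (u s) 0)^2) (2 * max (u t) 0 * (2*α + L - 2*t)) t
    simpa [max_eq_left hpos.le] using this

lemma my_mono (c : ℝ) (n : ℕ) (x : ℝ) :
    HasDerivAt (fun s : ℝ => c * s^n) (c * (n * x^(n-1))) x :=
  (hasDerivAt_pow n x).const_mul c

lemma my_intA (L : ℝ) :
    (∫ s in (0:ℝ)..L, (2*s*(L-s)*(L-2*s))^2) = 2*L^7/105 := by
  have key : ∀ x ∈ Set.uIcc (0:ℝ) L,
      HasDerivAt (fun s : ℝ => (4*L^4/3) * s^3 + (-6*L^3) * s^4 + (52*L^2/5) * s^5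
        + (-8*L) * s^6 + (16/7) * s^7) ((2*x*(L-x)*(L-2*x))^2) x := by
    intro x _
    have h := ((((my_mono (4*L^4/3) 3 x).fun_add (my_mono (-6*L^3) 4 x)).fun_add
      (my_mono (52*L^2/5) 5 x)).fun_add (my_mono (-8*L) 6 x)).fun_add (my_mono (16/7) 7 x)
    refine h.congr_deriv ?_
    push_cast
    ring
  have hInt : IntervalIntegrable (fun s : ℝ => (2*s*(L-s)*(L-2*s))^2) MeasureTheory.volume 0 L := by
    apply Continuous.intervalIntegrable; fun_prop
  rw [intervalIntegral.integral_eq_sub_of_hasDerivAt key hInt]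
  ring

lemma my_intB (L : ℝ) :
    (∫ s in (0:ℝ)..L, ((s*(L-s))^2)^2) = L^9/630 := by
  have key : ∀ x ∈ Set.uIcc (0:ℝ) L,
      HasDerivAt (fun s : ℝ => (L^4/5) * s^5 + (-2*L^3/3) * s^6 + (6*L^2/7) * s^7
        + (-L/2) * s^8 + (1/9) * s^9) (((x*(L-x))^2)^2) x := by
    intro x _
    have h := ((((my_mono (L^4/5) 5 x).fun_add (my_mono (-2*L^3/3) 6 x)).fun_add
      (my_mono (6*L^2/7) 7 x)).fun_add (my_mono (-L/2) 8 x)).fun_add (my_mono (1/9) 9 x)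
    refine h.congr_deriv ?_
    push_cast
    ring
  have hInt : IntervalIntegrable (fun s : ℝ => ((s*(L-s))^2)^2) MeasureTheory.volume 0 L := by
    apply Continuous.intervalIntegrable; fun_prop
  rw [intervalIntegral.integral_eq_sub_of_hasDerivAt key hInt]
  ring



/-- If `R, P : [a,b] → ℝ` are continuous and `R(t₀) < 0` for some `t₀ ∈ [a,b]`,
then there exists `h ∈ C¹([a,b];ℝ)` with `h(a) = h(b) = 0` such that
`∫_a^b [R(t)·ḣ(t)² + P(t)·h(t)²] dt < 0`. -/
theorem exists_variation_neg_of_R_neg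
    (a b : ℝ) (hab : a < b)
    (R P : ℝ → ℝ)
    (hR : ContinuousOn R (Set.Icc a b))
    (hP : ContinuousOn P (Set.Icc a b))
    (t₀ : ℝ) (ht₀ : t₀ ∈ Set.Icc a b) (hRneg : R t₀ < 0) :
    ∃ h h' : ℝ → ℝ,
      (∀ t ∈ Set.Icc a b, HasDerivWithinAt h (h' t) (Set.Icc a b) t) ∧
      ContinuousOn h' (Set.Icc a b) ∧
      h a = 0 ∧ h b = 0 ∧
      (∫ t in a..b, (R t * (h' t) ^ 2 + P t * (h t) ^ 2)) < 0 := by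
  set δ : ℝ := -(R t₀)/2 with hδdef
  have hδ : 0 < δ := by simp [hδdef]; linarith
  have h0 : R t₀ < -δ := by simp [hδdef]; linarith
  have hev : ∀ᶠ t in nhdsWithin t₀ (Set.Icc a b), R t < -δ :=
    (hR t₀ ht₀).eventually_lt_const h0
  rw [eventually_nhdsWithin_iff, Metric.eventually_nhds_iff] at hev
  obtain ⟨η, ηpos, hη⟩ := hev
  obtain ⟨M, hM⟩ := isCompact_Icc.exists_bound_of_continuousOn hP
  set M' : ℝ := max M 0 with hM'def
  have hM'0 : 0 ≤ M' := le_max_right _ _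
  have hPle : ∀ x ∈ Set.Icc a b, P x ≤ M' := fun x hx =>
    (le_abs_self _).trans ((by simpa [Real.norm_eq_abs] using hM x hx : |P x| ≤ M).trans (le_max_left _ _))
  set c : ℝ := max a (t₀ - η/2) with hcdef
  set d : ℝ := min b (t₀ + η/2) with hddef
  have hcd : c < d := by
    apply max_lt
    · exact lt_min hab (by cases' ht₀ with h1 h2; linarith)
    · exact lt_min (by cases' ht₀ with h1 h2; linarith) (by linarith)
  have hac : a ≤ c := le_max_left _ _
  have hdb : d ≤ b := min_le_left _ _
  have hball : ∀ t, c ≤ t → t ≤ d → |t - t₀| < η := by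
    intro t h1 h2
    rw [abs_sub_lt_iff]
    constructor
    · have := le_trans h2 (min_le_right b _); linarith
    · have := le_trans (le_max_right a _) h1; linarith
  set L : ℝ := min (d - c) (min 1 (12*δ/(M'+1))) with hLdef
  have hL0 : 0 < L := by
    apply lt_min (by linarith)
    exact lt_min one_pos (by positivity)
  have hLdc : L ≤ d - c := min_le_left _ _
  have hL1 : L ≤ 1 := (min_le_right _ _).trans (min_le_left _ _)
  have hLM : L * (M' + 1) ≤ 12 * δ := by
    have h1 : L ≤ 12*δ/(M'+1) := (min_le_right _ _).trans (min_le_right _ _)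
    have h2 : (0:ℝ) < M' + 1 := by linarith
    calc L * (M'+1) ≤ (12*δ/(M'+1)) * (M'+1) := by nlinarith
    _ = 12*δ := by field_simp
  -- the interval [α, β] = [c, c+L]
  set α : ℝ := c with hαdef
  have haα : a ≤ α := hac
  have hβb : α + L ≤ b := by
    have h3 : α + L ≤ d := by linarith
    linarith
  have hαβ : α ≤ α + L := by linarith
  have hRle : ∀ t, α ≤ t → t ≤ α + L → R t ≤ -δ := by
    intro t h1 h2
    have ht : t ∈ Set.Icc a b := ⟨by linarith, by linarith⟩
    have : |t - t₀| < η := hball t h1 (by linarith)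
    exact (hη (by rwa [Real.dist_eq]) ht).le
  -- the witnesses
  refine ⟨fun s => (max ((s - α) * (α + L - s)) 0)^2,
    fun t => 2 * max ((t - α) * (α + L - t)) 0 * (2*α + L - 2*t), ?_, ?_, ?_, ?_, ?_⟩
  · exact fun t _ => (my_hasDerivAt_h α L t).hasDerivWithinAt
  · exact ((continuous_const.mul (my_cont_v α L)).mul
      (continuous_const.sub (continuous_const.mul continuous_id))).continuousOn
  · have hua : (a - α) * (α + L - a) ≤ 0 :=
      mul_nonpos_iff.mpr (Or.inr ⟨by linarith, by linarith⟩)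
    simp [max_eq_right hua]
  · have hub : (b - α) * (α + L - b) ≤ 0 :=
      mul_nonpos_iff.mpr (Or.inl ⟨by linarith, by linarith⟩)
    simp [max_eq_right hub]
  · -- the integral estimate
    have hcv : Continuous (fun t => max ((t - α) * (α + L - t)) 0) := my_cont_v α L
    have hch' : Continuous (fun t => 2 * max ((t - α) * (α + L - t)) 0 * (2*α + L - 2*t)) :=
      (continuous_const.mul hcv).mul (continuous_const.sub (continuous_const.mul continuous_id))
    have hch : Continuous (fun t => (max ((t - α) * (α + L - t)) 0)^2) := hcv.pow 2
    set G : ℝ → ℝ := fun t => R t * (2 * max ((t - α) * (α + L - t)) 0 * (2*α + L - 2*t))^2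
        + P t * ((max ((t - α) * (α + L - t)) 0)^2)^2 with hGdef
    show (∫ t in a..b, G t) < 0
    have hαb : α ≤ b := le_trans hαβ hβb
    have hGcont : ContinuousOn G (Set.Icc a b) :=
      (hR.mul (hch'.pow 2).continuousOn).add (hP.mul (hch.pow 2).continuousOn)
    have hII : ∀ x y, a ≤ x → x ≤ y → y ≤ b → IntervalIntegrable G MeasureTheory.volume x y := by
      intro x y h1 h2 h3
      apply ContinuousOn.intervalIntegrable
      apply hGcont.mono
      rw [Set.uIcc_of_le h2]
      exact Set.Icc_subset_Icc h1 h3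
    have e1 : (∫ t in a..α, G t) = 0 := by
      have heq : Set.EqOn G (fun _ => 0) (Set.uIcc a α) := by
        intro t ht
        rw [Set.uIcc_of_le haα] at ht
        have hu0 : (t - α) * (α + L - t) ≤ 0 :=
          mul_nonpos_iff.mpr (Or.inr ⟨by linarith [ht.2], by linarith [ht.2]⟩)
        simp [hGdef, max_eq_right hu0]
      rw [intervalIntegral.integral_congr heq]
      simp
    have e3 : (∫ t in (α+L)..b, G t) = 0 := by
      have heq : Set.EqOn G (fun _ => 0) (Set.uIcc (α+L) b) := by
        intro t ht
        rw [Set.uIcc_of_le hβb] at ht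
        have hu0 : (t - α) * (α + L - t) ≤ 0 :=
          mul_nonpos_iff.mpr (Or.inl ⟨by linarith [ht.1], by linarith [ht.1]⟩)
        simp [hGdef, max_eq_right hu0]
      rw [intervalIntegral.integral_congr heq]
      simp
    have esplit : (∫ t in a..b, G t) = ∫ t in α..(α+L), G t := by
      rw [← intervalIntegral.integral_add_adjacent_intervals (hII a α le_rfl haα hαb)
          (hII α b haα hαb le_rfl),
        ← intervalIntegral.integral_add_adjacent_intervals (hII α (α+L) haα hαβ hβb)
          (hII (α+L) b (le_trans haα hαβ) hβb le_rfl), e1, e3]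
      ring
    have hmono : (∫ t in α..(α+L), G t) ≤ ∫ t in α..(α+L),
        (-δ * (2 * max ((t - α) * (α + L - t)) 0 * (2*α + L - 2*t))^2
          + M' * ((max ((t - α) * (α + L - t)) 0)^2)^2) := by
      apply intervalIntegral.integral_mono_on hαβ (hII α (α+L) haα hαβ hβb)
      · exact ((continuous_const.mul (hch'.pow 2)).add
          (continuous_const.mul (hch.pow 2))).intervalIntegrable _ _
      · intro t ht
        have h1 : R t ≤ -δ := hRle t ht.1 ht.2
        have h2 : P t ≤ M' := hPle t ⟨by linarith [ht.1], by linarith [ht.2]⟩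
        have h1' : R t * (2 * max ((t - α) * (α + L - t)) 0 * (2*α + L - 2*t))^2
            ≤ -δ * (2 * max ((t - α) * (α + L - t)) 0 * (2*α + L - 2*t))^2 :=
          mul_le_mul_of_nonneg_right h1 (sq_nonneg _)
        have h2' : P t * ((max ((t - α) * (α + L - t)) 0)^2)^2
            ≤ M' * ((max ((t - α) * (α + L - t)) 0)^2)^2 :=
          mul_le_mul_of_nonneg_right h2 (sq_nonneg _)
        simpa [hGdef] using add_le_add h1' h2'
    have hA : (∫ t in α..(α+L), (2 * max ((t - α) * (α + L - t)) 0 * (2*α + L - 2*t))^2)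
        = 2*L^7/105 := by
      have congA : Set.EqOn (fun t => (2 * max ((t - α) * (α + L - t)) 0 * (2*α + L - 2*t))^2)
          (fun t => (fun s => (2*s*(L-s)*(L-2*s))^2) (t - α)) (Set.uIcc α (α+L)) := by
        intro t ht
        rw [Set.uIcc_of_le hαβ] at ht
        have hu0 : 0 ≤ (t - α) * (α + L - t) :=
          mul_nonneg (by linarith [ht.1]) (by linarith [ht.2])
        simp only [max_eq_left hu0]
        ring
      rw [intervalIntegral.integral_congr congA,
        intervalIntegral.integral_comp_sub_right (fun s => (2*s*(L-s)*(L-2*s))^2) α,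
        sub_self, add_sub_cancel_left]
      exact my_intA L
    have hB : (∫ t in α..(α+L), ((max ((t - α) * (α + L - t)) 0)^2)^2) = L^9/630 := by
      have congB : Set.EqOn (fun t => ((max ((t - α) * (α + L - t)) 0)^2)^2)
          (fun t => (fun s => ((s*(L-s))^2)^2) (t - α)) (Set.uIcc α (α+L)) := by
        intro t ht
        rw [Set.uIcc_of_le hαβ] at ht
        have hu0 : 0 ≤ (t - α) * (α + L - t) :=
          mul_nonneg (by linarith [ht.1]) (by linarith [ht.2])
        simp only [max_eq_left hu0]
        ring
      rw [intervalIntegral.integral_congr congB,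
        intervalIntegral.integral_comp_sub_right (fun s => ((s*(L-s))^2)^2) α,
        sub_self, add_sub_cancel_left]
      exact my_intB L
    have hlin : (∫ t in α..(α+L),
        (-δ * (2 * max ((t - α) * (α + L - t)) 0 * (2*α + L - 2*t))^2
          + M' * ((max ((t - α) * (α + L - t)) 0)^2)^2))
        = -δ * (2*L^7/105) + M' * (L^9/630) := by
      rw [intervalIntegral.integral_add
          ((continuous_const.fun_mul (hch'.fun_pow 2)).intervalIntegrable _ _)
          ((continuous_const.fun_mul (hch.fun_pow 2)).intervalIntegrable _ _),
        intervalIntegral.integral_const_mul, intervalIntegral.integral_const_mul, hA, hB]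
    have hL2 : M' * L^2 < 12*δ := by
      nlinarith [mul_nonneg (mul_nonneg hM'0 hL0.le) (sub_nonneg.2 hL1)]
    have hfin : -δ * (2*L^7/105) + M' * (L^9/630) < 0 := by
      nlinarith [mul_pos (pow_pos hL0 7) (sub_pos.mpr hL2)]
    rw [esplit]
    calc (∫ t in α..(α+L), G t) ≤ _ := hmono
      _ = -δ * (2*L^7/105) + M' * (L^9/630) := hlin
      _ < 0 := hfin
end

section
/- Let E be a real Banach space with dual E* = (E →L[ℝ] ℝ), a < b, and A, B : [a,b] → E* continuous maps. Suppose that for every h ∈ C¹([a,b];E) with h(a) = h(b) = 0 one has ∫_a^b [ A(t)(h(t)) + B(t)(ḣ(t)) ] dt = 0. Then B is differentiable on [a,b] and B'(t) = A(t) for every t ∈ [a,b]. -/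
open Set MeasureTheory intervalIntegral

/-- A continuous nonnegative function with zero integral over `[a,b]` vanishes on `[a,b]`. -/
lemma contNonnegZero {g : ℝ → ℝ} (hg : Continuous g) {a b : ℝ} (hab : a < b)
    (h0 : ∀ t, 0 ≤ g t) (hint : (∫ t in a..b, g t) = 0) :
    ∀ t ∈ Set.Icc a b, g t = 0 := by
  have hi : IntervalIntegrable g volume a b := hg.intervalIntegrable a b
  have hae : g =ᵐ[volume.restrict (Set.Ioc a b)] 0 :=
    (intervalIntegral.integral_eq_zero_iff_of_le_of_nonneg_ae hab.le
      (Filter.Eventually.of_forall fun t => h0 t) hi).mp hint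
  intro t ht
  by_contra hne
  have hpos : 0 < g t := lt_of_le_of_ne (h0 t) (Ne.symm hne)
  have hU : IsOpen {x : ℝ | 0 < g x} := isOpen_lt continuous_const hg
  obtain ⟨ε, hε, hball⟩ := Metric.isOpen_iff.mp hU t hpos
  have hnull : volume.restrict (Set.Ioc a b) {x | ¬ g x = 0} = 0 := by
    have := MeasureTheory.ae_iff.mp hae
    simpa using this
  have hnull2 : volume.restrict (Set.Ioc a b) {x : ℝ | 0 < g x} = 0 := by
    refine measure_mono_null (fun x hx => ?_) hnull
    exact fun h => absurd h (ne_of_gt hx)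
  have hnull3 : volume ({x : ℝ | 0 < g x} ∩ Set.Ioc a b) = 0 := by
    rwa [Measure.restrict_apply hU.measurableSet] at hnull2
  set c := max a (t - ε) with hc
  set d := min b (t + ε) with hd
  have hcd : c < d := by
    rw [hc, hd]
    apply max_lt <;> apply lt_min
    · exact hab
    · exact lt_of_le_of_lt ht.1 (lt_add_of_pos_right t hε)
    · exact lt_of_lt_of_le (sub_lt_self t hε) ht.2
    · linarith
  have hsub : Set.Ioo c d ⊆ {x : ℝ | 0 < g x} ∩ Set.Ioc a b := by
    intro x hx
    have hxc := hx.1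
    have hxd := hx.2
    rw [hc] at hxc; rw [hd] at hxd
    constructor
    · apply hball
      rw [Metric.mem_ball, Real.dist_eq, abs_sub_lt_iff]
      constructor
      · have : x < t + ε := lt_of_lt_of_le hxd (min_le_right _ _)
        linarith
      · have : t - ε < x := lt_of_le_of_lt (le_max_right _ _) hxc
        linarith
    · exact ⟨lt_of_le_of_lt (le_max_left _ _) hxc,
        le_of_lt (lt_of_lt_of_le hxd (min_le_left _ _))⟩
  have hz : volume (Set.Ioo c d) = 0 := measure_mono_null hsub hnull3
  rw [Real.volume_Ioo] at hz
  exact absurd hz (by simp [ENNReal.ofReal_eq_zero, not_le, sub_pos, hcd])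

/-- **DuBois-Reymond / fundamental lemma variant.**
Let `A, B : [a,b] → E*` be continuous (`E* = E →L[ℝ] ℝ`). If
`∫_a^b [A(t)(h(t)) + B(t)(ḣ(t))] dt = 0` for every `h ∈ C¹([a,b];E)` with
`h(a) = h(b) = 0`, then `B` is differentiable on `[a,b]` with `B'(t) = A(t)`
for every `t ∈ [a,b]`. -/
theorem duBoisReymond
    {E : Type*} [NormedAddCommGroup E] [NormedSpace ℝ E] [CompleteSpace E]
    (a b : ℝ) (hab : a < b)
    (A B : ℝ → E →L[ℝ] ℝ)
    (hA : ContinuousOn A (Set.Icc a b))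
    (hB : ContinuousOn B (Set.Icc a b))
    (hyp : ∀ h h' : ℝ → E,
      (∀ t ∈ Set.Icc a b, HasDerivWithinAt h (h' t) (Set.Icc a b) t) →
      ContinuousOn h' (Set.Icc a b) →
      h a = 0 → h b = 0 →
      (∫ t in a..b, (A t (h t) + B t (h' t))) = 0) :
    ∀ t ∈ Set.Icc a b, HasDerivWithinAt B (A t) (Set.Icc a b) t := by
  have hab' : a ≤ b := hab.le
  set π : ℝ → ℝ := fun t => max a (min b t) with hπ
  have hπcont : Continuous π := continuous_const.max (continuous_const.min continuous_id)
  have hπmem : ∀ t, π t ∈ Set.Icc a b := fun t =>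
    ⟨le_max_left _ _, max_le hab' (min_le_left _ _)⟩
  have hπid : ∀ t ∈ Set.Icc a b, π t = t := by
    intro t ht
    rw [hπ]
    simp only
    rw [min_eq_right ht.2, max_eq_right ht.1]
  set Ae : ℝ → E →L[ℝ] ℝ := fun t => A (π t) with hAe
  set Be : ℝ → E →L[ℝ] ℝ := fun t => B (π t) with hBe
  have hAec : Continuous Ae := hA.comp_continuous hπcont hπmem
  have hBec : Continuous Be := hB.comp_continuous hπcont hπmem
  have hAeq : ∀ t ∈ Set.Icc a b, Ae t = A t := fun t ht => by rw [hAe]; simp [hπid t ht]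
  have hBeq : ∀ t ∈ Set.Icc a b, Be t = B t := fun t ht => by rw [hBe]; simp [hπid t ht]
  set Φ : ℝ → E →L[ℝ] ℝ := fun t => ∫ s in a..t, Ae s with hΦ
  have hΦd : ∀ t, HasDerivAt Φ (Ae t) t := fun t =>
    (hAec.integral_hasStrictDerivAt a t).hasDerivAt
  have hΦc : Continuous Φ := continuous_iff_continuousAt.mpr fun t => (hΦd t).continuousAt
  -- Key: ∫ (Be - Φ)(h') = 0 for all admissible variations
  have key : ∀ h h' : ℝ → E,
      (∀ t ∈ Set.Icc a b, HasDerivWithinAt h (h' t) (Set.Icc a b) t) →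
      ContinuousOn h' (Set.Icc a b) → h a = 0 → h b = 0 →
      (∫ t in a..b, ((Be t - Φ t) (h' t))) = 0 := by
    intro h h' hd hc' ha0 hb0
    have hhc : ContinuousOn h (Set.Icc a b) := fun t ht => (hd t ht).continuousWithinAt
    have hig1 : IntervalIntegrable (fun t => Ae t (h t) + Be t (h' t)) volume a b :=
      ((hAec.continuousOn.clm_apply hhc).add
        (hBec.continuousOn.clm_apply hc')).intervalIntegrable_of_Icc hab'
    have hig2 : IntervalIntegrable (fun t => Ae t (h t) + Φ t (h' t)) volume a b :=
      ((hAec.continuousOn.clm_apply hhc).add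
        (hΦc.continuousOn.clm_apply hc')).intervalIntegrable_of_Icc hab'
    -- integration by parts
    have ibp : (∫ t in a..b, (Ae t (h t) + Φ t (h' t))) = 0 := by
      have hder : ∀ x ∈ Set.Ioo a b,
          HasDerivWithinAt (fun t => Φ t (h t)) (Ae x (h x) + Φ x (h' x)) (Set.Ioi x) x := by
        intro x hx
        have hmem : Set.Icc a b ∈ nhds x := Icc_mem_nhds hx.1 hx.2
        have hdx : HasDerivAt h (h' x) x :=
          (hd x ⟨hx.1.le, hx.2.le⟩).hasDerivAt hmem
        exact ((hΦd x).clm_apply hdx).hasDerivWithinAt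
      have := intervalIntegral.integral_eq_sub_of_hasDeriv_right_of_le hab'
        (hΦc.continuousOn.clm_apply hhc) hder hig2
      rw [this, ha0, hb0, map_zero, map_zero, sub_zero]
    have hyp0 : (∫ t in a..b, (Ae t (h t) + Be t (h' t))) = 0 := by
      rw [← hyp h h' hd hc' ha0 hb0]
      apply intervalIntegral.integral_congr
      intro t ht
      rw [Set.uIcc_of_le hab'] at ht
      simp only
      rw [hAeq t ht, hBeq t ht]
    calc (∫ t in a..b, ((Be t - Φ t) (h' t)))
        = ∫ t in a..b, ((Ae t (h t) + Be t (h' t)) - (Ae t (h t) + Φ t (h' t))) := by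
          apply intervalIntegral.integral_congr
          intro t _
          simp only [ContinuousLinearMap.sub_apply]
          ring
      _ = (∫ t in a..b, (Ae t (h t) + Be t (h' t)))
            - (∫ t in a..b, (Ae t (h t) + Φ t (h' t))) :=
          intervalIntegral.integral_sub hig1 hig2
      _ = 0 := by rw [ibp, hyp0, sub_zero]
  -- Step 2: Be - Φ is constant on [a,b]
  have hconst : ∀ t ∈ Set.Icc a b, Be t - Φ t = Be a - Φ a := by
    intro t ht
    ext v
    set Cm : ℝ → E →L[ℝ] ℝ := fun s => Be s - Φ s with hCm
    have hCmc : Continuous Cm := hBec.sub hΦc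
    set m : ℝ := (∫ s in a..b, Cm s v) / (b - a) with hm
    set g : ℝ → ℝ := fun s => Cm s v - m with hgdef
    have hgc : Continuous g := (hCmc.clm_apply continuous_const).sub continuous_const
    have hgint : (∫ s in a..b, g s) = 0 := by
      rw [hgdef]
      rw [intervalIntegral.integral_sub
        ((hCmc.clm_apply continuous_const).intervalIntegrable a b)
        (intervalIntegrable_const), intervalIntegral.integral_const, hm, smul_eq_mul]
      have hba : b - a ≠ 0 := sub_ne_zero.mpr hab.ne'
      rw [← mul_div_assoc, mul_div_cancel_left₀ _ hba, sub_self]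
    set h0 : ℝ → E := fun s => ∫ u in a..s, g u • v with hh0
    have hgsv : Continuous (fun s => g s • v) := hgc.smul continuous_const
    have hd0 : ∀ s, HasDerivAt h0 (g s • v) s := fun s =>
      (hgsv.integral_hasStrictDerivAt a s).hasDerivAt
    have key0 := key h0 (fun s => g s • v) (fun s _ => (hd0 s).hasDerivWithinAt)
      hgsv.continuousOn
      (by rw [hh0]; simp)
      (by rw [hh0]; simp only; rw [intervalIntegral.integral_smul_const, hgint, zero_smul])
    -- key0 : ∫ Cm s (g s • v) = 0
    have hsq : (∫ s in a..b, g s * g s) = 0 := by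
      have e1 : (∫ s in a..b, g s * g s)
          = ∫ s in a..b, ((Cm s) (g s • v) - m * g s) := by
        apply intervalIntegral.integral_congr
        intro s _
        simp only [ContinuousLinearMap.map_smul, smul_eq_mul, hgdef]
        ring
      rw [e1, intervalIntegral.integral_sub
        ((hCmc.clm_apply hgsv).intervalIntegrable a b)
        (show IntervalIntegrable (fun s => m * g s) volume a b from
          (continuous_const.mul hgc).intervalIntegrable a b),
        key0, intervalIntegral.integral_const_mul, hgint, mul_zero, sub_zero]
    have hzero := contNonnegZero (hgc.mul hgc) hab (fun s => mul_self_nonneg (g s)) hsq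
    have hat : Cm t v = m := by
      have h2 : g t = 0 := mul_self_eq_zero.mp (hzero t ht)
      have h3 : Cm t v - m = 0 := h2
      linarith
    have haa : Cm a v = m := by
      have h2 : g a = 0 := mul_self_eq_zero.mp (hzero a (Set.left_mem_Icc.mpr hab'))
      have h3 : Cm a v - m = 0 := h2
      linarith
    show Cm t v = Cm a v
    rw [hat, haa]
  -- Conclusion
  intro t ht
  have hd : HasDerivWithinAt (fun s => Φ s + (Be a - Φ a)) (Ae t) (Set.Icc a b) t :=
    ((hΦd t).add_const _).hasDerivWithinAt
  have hBeq2 : ∀ s ∈ Set.Icc a b, B s = Φ s + (Be a - Φ a) := by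
    intro s hs
    rw [← hBeq s hs, ← hconst s hs]
    abel
  have final := hd.congr hBeq2 (hBeq2 t ht)
  rwa [hAeq t ht] at final
end

section
/- Let E be a real Banach space and L : ℝ × E × E → ℝ twice continuously Fréchet differentiable. Let h_t : ℝ × E × ℝ → ℝ and h_x : ℝ × E × ℝ → E be twice continuously Fréchet differentiable maps satisfying h_t(t,y,0) = t and h_x(t,y,0) = y for all (t,y), and define the generators T(t,y) = ∂h_t/∂s(t,y,0) and X(t,y) = ∂h_x/∂s(t,y,0). Let x ∈ C¹([a,b];E) and t ∈ [a,b], and write T'(t) = ∂_tT(t,x(t)) + D_yT(t,x(t))(ẋ(t)) and X'(t) = ∂_tX(t,x(t)) + D_yX(t,x(t))(ẋ(t)). Consider the real function φ(s) = L( h_t(t,x(t),s), h_x(t,x(t),s), [∂_t h_x(t,x(t),s) + D_y h_x(t,x(t),s)(ẋ(t))] / [∂_t h_t(t,x(t),s) + D_y h_t(t,x(t),s)(ẋ(t))] ) · ( ∂_t h_t(t,x(t),s) + D_y h_t(t,x(t),s)(ẋ(t)) ), which is defined for s near 0. Then φ is differentiable at s = 0 and φ'(0) = 0 if and only if ∂_tL(t,x(t),ẋ(t))·T(t,x(t))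 + D_xL(t,x(t),ẋ(t))(X(t,x(t))) + D_vL(t,x(t),ẋ(t))( X'(t) − T'(t)·ẋ(t) ) + L(t,x(t),ẋ(t))·T'(t) = 0. -/
open ContinuousLinearMap

section AuxInvariance

variable {E F G : Type*} [NormedAddCommGroup E] [NormedSpace ℝ E]
  [NormedAddCommGroup F] [NormedSpace ℝ F]
  [NormedAddCommGroup G] [NormedSpace ℝ G]

lemma aux_curve_s (τ : ℝ) (y : E) (s : ℝ) :
    HasDerivAt (fun s' : ℝ => ((τ, y, s') : ℝ × E × ℝ)) (0, 0, 1) s :=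
  HasDerivAt.prodMk (hasDerivAt_const s τ) (HasDerivAt.prodMk (hasDerivAt_const s y) (hasDerivAt_id s))

lemma aux_curve_t (τ : ℝ) (y : E) (v : F) :
    HasDerivAt (fun τ' : ℝ => ((τ', y, v) : ℝ × E × F)) (1, 0, 0) τ :=
  HasDerivAt.prodMk (hasDerivAt_id τ) (HasDerivAt.prodMk (hasDerivAt_const τ y) (hasDerivAt_const τ v))

/-- inclusion of `E` into the middle slot. -/
noncomputable def inclY (E F : Type*) [NormedAddCommGroup E] [NormedSpace ℝ E]
    [NormedAddCommGroup F] [NormedSpace ℝ F] :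
    E →L[ℝ] ℝ × E × F :=
  (0 : E →L[ℝ] ℝ).prod ((ContinuousLinearMap.id ℝ E).prod (0 : E →L[ℝ] F))

@[simp] lemma inclY_apply (v : E) : inclY E F v = (0, v, 0) := rfl

/-- inclusion of `F` into the last slot. -/
noncomputable def inclV (E F : Type*) [NormedAddCommGroup E] [NormedSpace ℝ E]
    [NormedAddCommGroup F] [NormedSpace ℝ F] :
    F →L[ℝ] ℝ × E × F :=
  (0 : F →L[ℝ] ℝ).prod ((0 : F →L[ℝ] E).prod (ContinuousLinearMap.id ℝ F))

@[simp] lemma inclV_apply (v : F) : inclV E F v = (0, 0, v) := rfl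

lemma aux_curve_y (τ : ℝ) (v : F) (y : E) :
    HasFDerivAt (fun y' : E => ((τ, y', v) : ℝ × E × F)) (inclY E F) y :=
  HasFDerivAt.prodMk (hasFDerivAt_const τ y) (HasFDerivAt.prodMk (hasFDerivAt_id y) (hasFDerivAt_const v y))

lemma aux_curve_v (τ : ℝ) (y : E) (v : F) :
    HasFDerivAt (fun v' : F => ((τ, y, v') : ℝ × E × F)) (inclV E F) v :=
  HasFDerivAt.prodMk (hasFDerivAt_const τ v) (HasFDerivAt.prodMk (hasFDerivAt_const y v) (hasFDerivAt_id v))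

lemma aux_swap (F : ℝ × E × ℝ → G) (hF : ContDiff ℝ 2 F) (t : ℝ) (y₀ v₀ : E) :
    HasDerivAt
      (fun s => deriv (fun τ => F (τ, y₀, s)) t
        + fderiv ℝ (fun y => F (t, y, s)) y₀ v₀)
      (deriv (fun τ => deriv (fun s => F (τ, y₀, s)) 0) t
        + fderiv ℝ (fun y => deriv (fun s => F (t, y, s)) 0) y₀ v₀) 0 := by
  have hFd : Differentiable ℝ F := hF.differentiable two_ne_zero
  have hΨ : ContDiff ℝ 1 (fderiv ℝ F) := hF.fderiv_right (le_refl 2)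
  have hΨd : Differentiable ℝ (fderiv ℝ F) := hΨ.differentiable one_ne_zero
  set Ψ := fderiv ℝ F with hΨdef
  set f'' := fderiv ℝ Ψ (t, y₀, 0) with hf''def
  have hΨat : HasFDerivAt Ψ f'' (t, y₀, 0) := (hΨd _).hasFDerivAt
  have hsym : ∀ v w, f'' v w = f'' w v :=
    second_derivative_symmetric (fun y => (hFd y).hasFDerivAt) hΨat
  have hCs : ∀ s : ℝ, deriv (fun τ => F (τ, y₀, s)) t
      + fderiv ℝ (fun y => F (t, y, s)) y₀ v₀ = Ψ (t, y₀, s) (1, v₀, 0) := by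
    intro s
    have h1 : deriv (fun τ => F (τ, y₀, s)) t = Ψ (t, y₀, s) (1, 0, 0) :=
      ((hFd _).hasFDerivAt.comp_hasDerivAt t (aux_curve_t t y₀ s)).deriv
    have h2 : fderiv ℝ (fun y => F (t, y, s)) y₀ = (Ψ (t, y₀, s)).comp (inclY E ℝ) :=
      ((hFd _).hasFDerivAt.comp y₀ (aux_curve_y t s y₀)).fderiv
    rw [h1, h2, ContinuousLinearMap.comp_apply, inclY_apply, ← (Ψ (t, y₀, s)).map_add]
    norm_num
  have hC : HasDerivAt (fun s => Ψ (t, y₀, s) ((1 : ℝ), v₀, (0 : ℝ)))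
      (f'' (0, 0, 1) (1, v₀, 0)) 0 := by
    have h1 := hΨat.comp_hasDerivAt 0 (aux_curve_s t y₀ 0)
    have h := HasDerivAt.clm_apply h1
      (hasDerivAt_const (0 : ℝ) ((1 : ℝ), v₀, (0 : ℝ)))
    simpa using h
  have hTd : HasDerivAt (fun τ => deriv (fun s => F (τ, y₀, s)) 0)
      (f'' (1, 0, 0) (0, 0, 1)) t := by
    have heq : (fun τ => deriv (fun s => F (τ, y₀, s)) 0)
        = fun τ => Ψ (τ, y₀, 0) ((0 : ℝ), (0 : E), (1 : ℝ)) := by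
      funext τ
      exact ((hFd _).hasFDerivAt.comp_hasDerivAt 0 (aux_curve_s τ y₀ 0)).deriv
    rw [heq]
    have h1 := hΨat.comp_hasDerivAt t (aux_curve_t t y₀ (0 : ℝ))
    have h := HasDerivAt.clm_apply h1
      (hasDerivAt_const t ((0 : ℝ), (0 : E), (1 : ℝ)))
    simpa using h
  have hXd : fderiv ℝ (fun y => deriv (fun s => F (t, y, s)) 0) y₀ v₀
      = f'' (0, v₀, 0) (0, 0, 1) := by
    have heq : (fun y => deriv (fun s => F (t, y, s)) 0)
        = fun y => Ψ (t, y, 0) ((0 : ℝ), (0 : E), (1 : ℝ)) := by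
      funext y
      exact ((hFd _).hasFDerivAt.comp_hasDerivAt 0 (aux_curve_s t y 0)).deriv
    rw [heq]
    have hc : HasFDerivAt (fun y => Ψ (t, y, 0)) (f''.comp (inclY E ℝ)) y₀ :=
      hΨat.comp y₀ (aux_curve_y t 0 y₀)
    have hc2 : HasFDerivAt (fun y => Ψ (t, y, 0) ((0 : ℝ), (0 : E), (1 : ℝ)))
        ((ContinuousLinearMap.apply ℝ G ((0 : ℝ), (0 : E), (1 : ℝ))).comp
          (f''.comp (inclY E ℝ))) y₀ :=
      (ContinuousLinearMap.apply ℝ G ((0 : ℝ), (0 : E), (1 : ℝ))).hasFDerivAt.comp y₀ hc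
    rw [hc2.fderiv]
    simp
  rw [show (fun s => deriv (fun τ => F (τ, y₀, s)) t
      + fderiv ℝ (fun y => F (t, y, s)) y₀ v₀)
      = fun s => Ψ (t, y₀, s) ((1 : ℝ), v₀, (0 : ℝ)) from funext hCs,
    hTd.deriv, hXd]
  have key : f'' (1, 0, 0) (0, 0, 1) + f'' (0, v₀, 0) (0, 0, 1)
      = f'' (0, 0, 1) (1, v₀, 0) := by
    rw [hsym (0, 0, 1) (1, v₀, 0), ← ContinuousLinearMap.add_apply, ← f''.map_add]
    norm_num
  rw [key]
  exact hC

end AuxInvariance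

/-- **Necessary and sufficient condition of invariance.**
Let `L : ℝ × E × E → ℝ` be twice continuously Fréchet differentiable, and let
`ht : ℝ × E × ℝ → ℝ`, `hx : ℝ × E × ℝ → E` (written curried) be twice
continuously Fréchet differentiable families of transformations with
`ht(t,y,0) = t` and `hx(t,y,0) = y`, generators
`T(t,y) = ∂ₛht(t,y,0)`, `X(t,y) = ∂ₛhx(t,y,0)`. Fix `x ∈ C¹([a,b];E)` and
`t ∈ [a,b]`, and set `T' = ∂ₜT(t,x t) + D_yT(t,x t)(ẋ t)`,
`X' = ∂ₜX(t,x t) + D_yX(t,x t)(ẋ t)`. Then the function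
`φ(s) = L(ht(t,x,s), hx(t,x,s), [∂ₜhx + D_yhx(ẋ)]/[∂ₜht + D_yht(ẋ)]) · (∂ₜht + D_yht(ẋ))`
is differentiable at `s = 0` with `φ'(0) = 0` if and only if
`∂ₜL·T + D_xL(X) + D_vL(X' − T'·ẋ) + L·T' = 0` at `(t, x t, ẋ t)`. -/
theorem invariance_necessary_sufficient
    {E : Type*} [NormedAddCommGroup E] [NormedSpace ℝ E] [CompleteSpace E]
    (a b : ℝ) (hab : a < b)
    (L : ℝ × E × E → ℝ) (hL : ContDiff ℝ 2 L)
    (ht : ℝ → E → ℝ → ℝ) (hx : ℝ → E → ℝ → E)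
    (hht : ContDiff ℝ 2 (fun p : ℝ × E × ℝ => ht p.1 p.2.1 p.2.2))
    (hhx : ContDiff ℝ 2 (fun p : ℝ × E × ℝ => hx p.1 p.2.1 p.2.2))
    (hht0 : ∀ (τ : ℝ) (y : E), ht τ y 0 = τ)
    (hhx0 : ∀ (τ : ℝ) (y : E), hx τ y 0 = y)
    (T : ℝ → E → ℝ) (X : ℝ → E → E)
    (hT : ∀ (τ : ℝ) (y : E), T τ y = deriv (fun s => ht τ y s) 0)
    (hX : ∀ (τ : ℝ) (y : E), X τ y = deriv (fun s => hx τ y s) 0)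
    (x x' : ℝ → E)
    (hx1 : ∀ τ ∈ Set.Icc a b, HasDerivWithinAt x (x' τ) (Set.Icc a b) τ)
    (hx1' : ContinuousOn x' (Set.Icc a b))
    (t : ℝ) (htt : t ∈ Set.Icc a b)
    (Tdot : ℝ) (Xdot : E)
    (hTdot : Tdot = deriv (fun τ => T τ (x t)) t + fderiv ℝ (fun y => T t y) (x t) (x' t))
    (hXdot : Xdot = deriv (fun τ => X τ (x t)) t + fderiv ℝ (fun y => X t y) (x t) (x' t)) :
    HasDerivAt
      (fun s : ℝ =>
        L (ht t (x t) s, hx t (x t) s,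
            (deriv (fun τ => ht τ (x t) s) t
              + fderiv ℝ (fun y => ht t y s) (x t) (x' t))⁻¹ •
            (deriv (fun τ => hx τ (x t) s) t
              + fderiv ℝ (fun y => hx t y s) (x t) (x' t)))
          * (deriv (fun τ => ht τ (x t) s) t
              + fderiv ℝ (fun y => ht t y s) (x t) (x' t)))
      0 0
    ↔
    deriv (fun τ => L (τ, x t, x' t)) t * T t (x t)
      + fderiv ℝ (fun y => L (t, y, x' t)) (x t) (X t (x t))
      + fderiv ℝ (fun v => L (t, x t, v)) (x' t) (Xdot - Tdot • x' t)
      + L (t, x t, x' t) * Tdot = 0 := by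
  have hLd : Differentiable ℝ L := hL.differentiable two_ne_zero
  have hhtd : Differentiable ℝ (fun p : ℝ × E × ℝ => ht p.1 p.2.1 p.2.2) :=
    hht.differentiable two_ne_zero
  have hhxd : Differentiable ℝ (fun p : ℝ × E × ℝ => hx p.1 p.2.1 p.2.2) :=
    hhx.differentiable two_ne_zero
  -- values at s = 0
  have hC0 : deriv (fun τ => ht τ (x t) 0) t
      + fderiv ℝ (fun y => ht t y 0) (x t) (x' t) = 1 := by
    have e1 : (fun τ => ht τ (x t) 0) = fun τ => τ := funext fun τ => hht0 τ (x t)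
    have e2 : (fun y : E => ht t y 0) = fun _ => t := funext fun y => hht0 t y
    rw [e1, e2, deriv_id'']
    simp
  have hD0 : deriv (fun τ => hx τ (x t) 0) t
      + fderiv ℝ (fun y => hx t y 0) (x t) (x' t) = x' t := by
    have e1 : (fun τ => hx τ (x t) 0) = fun _ => x t := funext fun τ => hhx0 τ (x t)
    have e2 : (fun y : E => hx t y 0) = fun y => y := funext fun y => hhx0 t y
    rw [e1, e2, deriv_const]
    simp [fderiv_id']
  -- derivatives of the coefficient functions
  have hCd : HasDerivAt (fun s => deriv (fun τ => ht τ (x t) s) t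
      + fderiv ℝ (fun y => ht t y s) (x t) (x' t)) Tdot 0 := by
    have e1 : (fun τ => T τ (x t)) = fun τ => deriv (fun s => ht τ (x t) s) 0 :=
      funext fun τ => hT τ (x t)
    have e2 : (fun y : E => T t y) = fun y => deriv (fun s => ht t y s) 0 :=
      funext fun y => hT t y
    rw [hTdot, e1, e2]
    exact aux_swap _ hht t (x t) (x' t)
  have hDd : HasDerivAt (fun s => deriv (fun τ => hx τ (x t) s) t
      + fderiv ℝ (fun y => hx t y s) (x t) (x' t)) Xdot 0 := by
    have e1 : (fun τ => X τ (x t)) = fun τ => deriv (fun s => hx τ (x t) s) 0 :=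
      funext fun τ => hX τ (x t)
    have e2 : (fun y : E => X t y) = fun y => deriv (fun s => hx t y s) 0 :=
      funext fun y => hX t y
    rw [hXdot, e1, e2]
    exact aux_swap _ hhx t (x t) (x' t)
  -- derivatives of the first two components
  have hA : HasDerivAt (fun s => ht t (x t) s) (T t (x t)) 0 := by
    have h : HasDerivAt (fun s => ht t (x t) s)
        (fderiv ℝ (fun p : ℝ × E × ℝ => ht p.1 p.2.1 p.2.2) (t, x t, 0) (0, 0, 1)) 0 :=
      (hhtd _).hasFDerivAt.comp_hasDerivAt 0 (aux_curve_s t (x t) 0)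
    rw [hT t (x t)]
    exact h.differentiableAt.hasDerivAt
  have hB : HasDerivAt (fun s => hx t (x t) s) (X t (x t)) 0 := by
    have h : HasDerivAt (fun s => hx t (x t) s)
        (fderiv ℝ (fun p : ℝ × E × ℝ => hx p.1 p.2.1 p.2.2) (t, x t, 0) (0, 0, 1)) 0 :=
      (hhxd _).hasFDerivAt.comp_hasDerivAt 0 (aux_curve_s t (x t) 0)
    rw [hX t (x t)]
    exact h.differentiableAt.hasDerivAt
  -- the third component
  have hg : HasDerivAt (fun s => (deriv (fun τ => ht τ (x t) s) t
        + fderiv ℝ (fun y => ht t y s) (x t) (x' t))⁻¹ •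
        (deriv (fun τ => hx τ (x t) s) t
        + fderiv ℝ (fun y => hx t y s) (x t) (x' t)))
      (Xdot - Tdot • x' t) 0 := by
    have h := (hCd.inv (by rw [hC0]; norm_num)).smul hDd
    rw [hC0, hD0] at h
    simp only [Pi.inv_apply, hC0] at h
    convert h using 1
    · rfl
    · module
  -- the full curve
  have hcurve : HasDerivAt (fun s => ((ht t (x t) s, hx t (x t) s,
      (deriv (fun τ => ht τ (x t) s) t
        + fderiv ℝ (fun y => ht t y s) (x t) (x' t))⁻¹ •
      (deriv (fun τ => hx τ (x t) s) t
        + fderiv ℝ (fun y => hx t y s) (x t) (x' t))) : ℝ × E × E))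
      (T t (x t), X t (x t), Xdot - Tdot • x' t) 0 := HasDerivAt.prodMk hA (HasDerivAt.prodMk hB hg)
  have hval : ((ht t (x t) 0, hx t (x t) 0,
      (deriv (fun τ => ht τ (x t) 0) t
        + fderiv ℝ (fun y => ht t y 0) (x t) (x' t))⁻¹ •
      (deriv (fun τ => hx τ (x t) 0) t
        + fderiv ℝ (fun y => hx t y 0) (x t) (x' t))) : ℝ × E × E)
      = (t, x t, x' t) := by
    rw [hht0, hhx0, hC0, hD0]
    norm_num
  set L' := fderiv ℝ L (t, x t, x' t) with hL'def
  have hφ1 : HasDerivAt (fun s => L (ht t (x t) s, hx t (x t) s,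
      (deriv (fun τ => ht τ (x t) s) t
        + fderiv ℝ (fun y => ht t y s) (x t) (x' t))⁻¹ •
      (deriv (fun τ => hx τ (x t) s) t
        + fderiv ℝ (fun y => hx t y s) (x t) (x' t))))
      (L' (T t (x t), X t (x t), Xdot - Tdot • x' t)) 0 :=
    (hLd _).hasFDerivAt.comp_hasDerivAt_of_eq 0 hcurve hval.symm
  have hφ := hφ1.mul hCd
  rw [hval, hC0, mul_one] at hφ
  -- identify the derivative with the Euler-type expression
  have hLt : deriv (fun τ => L (τ, x t, x' t)) t = L' (1, 0, 0) :=
    ((hLd _).hasFDerivAt.comp_hasDerivAt t (aux_curve_t t (x t) (x' t))).deriv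
  have hLy : fderiv ℝ (fun y => L (t, y, x' t)) (x t) = L'.comp (inclY E E) :=
    ((hLd _).hasFDerivAt.comp (x t) (aux_curve_y t (x' t) (x t))).fderiv
  have hLv : fderiv ℝ (fun v => L (t, x t, v)) (x' t) = L'.comp (inclV E E) :=
    ((hLd _).hasFDerivAt.comp (x' t) (aux_curve_v t (x t) (x' t))).fderiv
  have hsum : deriv (fun τ => L (τ, x t, x' t)) t * T t (x t)
      + fderiv ℝ (fun y => L (t, y, x' t)) (x t) (X t (x t))
      + fderiv ℝ (fun v => L (t, x t, v)) (x' t) (Xdot - Tdot • x' t)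
      + L (t, x t, x' t) * Tdot
      = L' (T t (x t), X t (x t), Xdot - Tdot • x' t) + L (t, x t, x' t) * Tdot := by
    rw [hLt, hLy, hLv]
    have hdec : ((T t (x t), X t (x t), Xdot - Tdot • x' t) : ℝ × E × E)
        = T t (x t) • ((1 : ℝ), (0 : E), (0 : E)) + (0, X t (x t), 0)
          + (0, 0, Xdot - Tdot • x' t) := by
      simp [Prod.ext_iff]
    rw [hdec, L'.map_add, L'.map_add, L'.map_smul]
    simp [ContinuousLinearMap.comp_apply, smul_eq_mul, mul_comm]
  rw [hsum]
  constructor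
  · intro h
    exact hφ.unique h
  · intro h
    exact h ▸ hφ
end

section
/- Let E be a real Banach space, a < b, and L : ℝ × E × E → ℝ twice continuously Fréchet differentiable. Define the Hamiltonian H(t,y,v) = −L(t,y,v) + D_vL(t,y,v)(v). Let T : ℝ × E → ℝ and X : ℝ × E → E be continuously Fréchet differentiable, and let x ∈ C²([a,b];E) be a solution of the Euler–Lagrange equation d/dt [ D_vL(t,x(t),ẋ(t)) ] = D_xL(t,x(t),ẋ(t)) on [a,b]. Write T'(t) = ∂_tT(t,x(t)) + D_yT(t,x(t))(ẋ(t)) and X'(t) = ∂_tX(t,x(t)) + D_yX(t,x(t))(ẋ(t)), and assume that for every t ∈ [a,b], ∂_tL(t,x(t),ẋ(t))·T(t,x(t)) + D_xL(t,x(t),ẋ(t))(X(t,x(t))) + D_vL(t,x(t),ẋ(t))( X'(t) − T'(t)·ẋ(t) ) + L(t,x(t),ẋ(t))·T'(t) = 0. Then the function t ↦ D_vL(t,x(t),ẋ(t))(X(t,x(t))) − H(t,x(t),ẋ(t))·T(t,x(t)) is constant on [a,b]. -/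
open Set ContinuousLinearMap

/-- **Noether's theorem, Hamiltonian form.**
With the Hamiltonian `H(t,y,v) = −L(t,y,v) + D_vL(t,y,v)(v)`, under the same
hypotheses as Noether's theorem (Euler–Lagrange equation and invariance
identity along `x ∈ C²([a,b];E)`), the function
`t ↦ D_vL(t,x,ẋ)(X(t,x)) − H(t,x,ẋ)·T(t,x)` is constant on `[a,b]`. -/
theorem noether_hamiltonian_form
    {E : Type*} [NormedAddCommGroup E] [NormedSpace ℝ E] [CompleteSpace E]
    (a b : ℝ) (hab : a < b)
    (L : ℝ × E × E → ℝ) (hL : ContDiff ℝ 2 L)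
    (H : ℝ → E → E → ℝ)
    (hH : ∀ (t : ℝ) (y v : E), H t y v = -L (t, y, v) + fderiv ℝ (fun u => L (t, y, u)) v v)
    (T : ℝ → E → ℝ) (X : ℝ → E → E)
    (hT : ContDiff ℝ 1 (fun p : ℝ × E => T p.1 p.2))
    (hX : ContDiff ℝ 1 (fun p : ℝ × E => X p.1 p.2))
    (x x' x'' : ℝ → E)
    (hx : ∀ t ∈ Set.Icc a b, HasDerivWithinAt x (x' t) (Set.Icc a b) t)
    (hx' : ∀ t ∈ Set.Icc a b, HasDerivWithinAt x' (x'' t) (Set.Icc a b) t)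
    (hx'' : ContinuousOn x'' (Set.Icc a b))
    (hEL : ∀ t ∈ Set.Icc a b,
      HasDerivWithinAt (fun τ => fderiv ℝ (fun v => L (τ, x τ, v)) (x' τ))
        (fderiv ℝ (fun y => L (t, y, x' t)) (x t)) (Set.Icc a b) t)
    (hinv : ∀ t ∈ Set.Icc a b,
      deriv (fun τ => L (τ, x t, x' t)) t * T t (x t)
        + fderiv ℝ (fun y => L (t, y, x' t)) (x t) (X t (x t))
        + fderiv ℝ (fun v => L (t, x t, v)) (x' t)
            ((deriv (fun τ => X τ (x t)) t + fderiv ℝ (fun y => X t y) (x t) (x' t))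
              - (deriv (fun τ => T τ (x t)) t
                  + fderiv ℝ (fun y => T t y) (x t) (x' t)) • x' t)
        + L (t, x t, x' t)
            * (deriv (fun τ => T τ (x t)) t + fderiv ℝ (fun y => T t y) (x t) (x' t))
        = 0) :
    ∃ c : ℝ, ∀ t ∈ Set.Icc a b,
      fderiv ℝ (fun v => L (t, x t, v)) (x' t) (X t (x t))
        - H t (x t) (x' t) * T t (x t) = c := by
  have hLd : Differentiable ℝ L := hL.differentiable (by norm_num)
  have hTd : Differentiable ℝ (fun p : ℝ × E => T p.1 p.2) := hT.differentiable (by norm_num)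
  have hXd : Differentiable ℝ (fun p : ℝ × E => X p.1 p.2) := hX.differentiable (by norm_num)
  set f : ℝ → ℝ := fun t => fderiv ℝ (fun v => L (t, x t, v)) (x' t) (X t (x t))
      + (L (t, x t, x' t) - fderiv ℝ (fun v => L (t, x t, v)) (x' t) (x' t)) * T t (x t)
    with hfdef
  have hfeq : ∀ t : ℝ, fderiv ℝ (fun v => L (t, x t, v)) (x' t) (X t (x t))
      - H t (x t) (x' t) * T t (x t) = f t := by
    intro t
    rw [hH, hfdef]
    ring
  -- main derivative computation
  have key : ∀ t ∈ Set.Icc a b, HasDerivWithinAt f 0 (Set.Icc a b) t := by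
    intro t ht
    set P := fderiv ℝ L (t, x t, x' t) with hPdef
    set X' := fderiv ℝ (fun p : ℝ × E => X p.1 p.2) (t, x t) with hX'def
    set T' := fderiv ℝ (fun p : ℝ × E => T p.1 p.2) (t, x t) with hT'def
    -- partial derivative identities for L
    have hLv : HasFDerivAt (fun v : E => L (t, x t, v))
        (P.comp ((0 : E →L[ℝ] ℝ).prod ((0 : E →L[ℝ] E).prod (ContinuousLinearMap.id ℝ E))))
        (x' t) :=
      (hLd _).hasFDerivAt.comp _
        (HasFDerivAt.prodMk (hasFDerivAt_const _ _) (HasFDerivAt.prodMk (hasFDerivAt_const _ _) (hasFDerivAt_id _)))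
    have hpu : ∀ u : E, fderiv ℝ (fun v => L (t, x t, v)) (x' t) u = P (0, 0, u) := by
      intro u; rw [hLv.fderiv]; simp
    have hLy : HasFDerivAt (fun y : E => L (t, y, x' t))
        (P.comp ((0 : E →L[ℝ] ℝ).prod ((ContinuousLinearMap.id ℝ E).prod (0 : E →L[ℝ] E))))
        (x t) :=
      (hLd _).hasFDerivAt.comp _
        (HasFDerivAt.prodMk (hasFDerivAt_const _ _) (HasFDerivAt.prodMk (hasFDerivAt_id _) (hasFDerivAt_const _ _)))
    have hqw : ∀ w : E, fderiv ℝ (fun y => L (t, y, x' t)) (x t) w = P (0, w, 0) := by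
      intro w; rw [hLy.fderiv]; simp
    have hLt : deriv (fun τ => L (τ, x t, x' t)) t = P (1, 0, 0) := by
      have hc : HasDerivAt (fun τ : ℝ => (τ, x t, x' t)) ((1 : ℝ), (0 : E), (0 : E)) t :=
        HasDerivAt.prodMk (hasDerivAt_id t) (HasDerivAt.prodMk (hasDerivAt_const _ _) (hasDerivAt_const _ _))
      exact ((hLd _).hasFDerivAt.comp_hasDerivAt t hc).deriv
    -- partial derivative identities for X and T
    have hX1 : deriv (fun τ => X τ (x t)) t = X' (1, 0) := by
      have hc : HasDerivAt (fun τ : ℝ => (τ, x t)) ((1 : ℝ), (0 : E)) t :=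
        HasDerivAt.prodMk (hasDerivAt_id t) (hasDerivAt_const _ _)
      exact ((hXd _).hasFDerivAt.comp_hasDerivAt t hc).deriv
    have hX2 : fderiv ℝ (fun y => X t y) (x t) (x' t) = X' (0, x' t) := by
      have hc : HasFDerivAt (fun y : E => ((t : ℝ), y))
          ((0 : E →L[ℝ] ℝ).prod (ContinuousLinearMap.id ℝ E)) (x t) :=
        HasFDerivAt.prodMk (hasFDerivAt_const _ _) (hasFDerivAt_id _)
      have h0 := (hXd _).hasFDerivAt.comp _ hc
      have h' : HasFDerivAt (fun y : E => X t y)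
          (X'.comp ((0 : E →L[ℝ] ℝ).prod (ContinuousLinearMap.id ℝ E))) (x t) := h0
      rw [h'.fderiv]; simp
    have hT1 : deriv (fun τ => T τ (x t)) t = T' (1, 0) := by
      have hc : HasDerivAt (fun τ : ℝ => (τ, x t)) ((1 : ℝ), (0 : E)) t :=
        HasDerivAt.prodMk (hasDerivAt_id t) (hasDerivAt_const _ _)
      exact ((hTd _).hasFDerivAt.comp_hasDerivAt t hc).deriv
    have hT2 : fderiv ℝ (fun y => T t y) (x t) (x' t) = T' (0, x' t) := by
      have hc : HasFDerivAt (fun y : E => ((t : ℝ), y))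
          ((0 : E →L[ℝ] ℝ).prod (ContinuousLinearMap.id ℝ E)) (x t) :=
        HasFDerivAt.prodMk (hasFDerivAt_const _ _) (hasFDerivAt_id _)
      have h0 := (hTd _).hasFDerivAt.comp _ hc
      have h' : HasFDerivAt (fun y : E => T t y)
          (T'.comp ((0 : E →L[ℝ] ℝ).prod (ContinuousLinearMap.id ℝ E))) (x t) := h0
      rw [h'.fderiv]; simp
    -- curves
    have hxc : HasDerivWithinAt (fun τ => (τ, x τ)) ((1 : ℝ), x' t) (Set.Icc a b) t :=
      HasDerivWithinAt.prodMk (hasDerivWithinAt_id t _) (hx t ht)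
    have hγ : HasDerivWithinAt (fun τ => (τ, x τ, x' τ)) ((1 : ℝ), x' t, x'' t)
        (Set.Icc a b) t :=
      HasDerivWithinAt.prodMk (hasDerivWithinAt_id t _) (HasDerivWithinAt.prodMk (hx t ht) (hx' t ht))
    have hLγ : HasDerivWithinAt (fun τ => L (τ, x τ, x' τ)) (P (1, x' t, x'' t))
        (Set.Icc a b) t :=
      (hLd _).hasFDerivAt.comp_hasDerivWithinAt t hγ
    have hXc : HasDerivWithinAt (fun τ => X τ (x τ)) (X' (1, x' t)) (Set.Icc a b) t :=
      (hXd _).hasFDerivAt.comp_hasDerivWithinAt t hxc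
    have hTc : HasDerivWithinAt (fun τ => T τ (x τ)) (T' (1, x' t)) (Set.Icc a b) t :=
      (hTd _).hasFDerivAt.comp_hasDerivWithinAt t hxc
    -- momentum
    have hp := hEL t ht
    have h1 : HasDerivWithinAt (fun τ => fderiv ℝ (fun v => L (τ, x τ, v)) (x' τ) (X τ (x τ)))
        (fderiv ℝ (fun y => L (t, y, x' t)) (x t) (X t (x t))
          + fderiv ℝ (fun v => L (t, x t, v)) (x' t) (X' (1, x' t))) (Set.Icc a b) t :=
      hp.clm_apply hXc
    have h2 : HasDerivWithinAt (fun τ => fderiv ℝ (fun v => L (τ, x τ, v)) (x' τ) (x' τ))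
        (fderiv ℝ (fun y => L (t, y, x' t)) (x t) (x' t)
          + fderiv ℝ (fun v => L (t, x t, v)) (x' t) (x'' t)) (Set.Icc a b) t :=
      hp.clm_apply (hx' t ht)
    have h3 := ((hLγ.sub h2).mul hTc).const_add 0
    have hF := h1.add ((hLγ.sub h2).mul hTc)
    -- hF : HasDerivWithinAt f D
    have hinvt := hinv t ht
    rw [hLt, hX1, hX2, hT1, hT2, map_sub, map_add, map_smul, smul_eq_mul] at hinvt
    have hXadd : X' (1, 0) + X' (0, x' t) = X' (1, x' t) := by
      rw [← map_add]; norm_num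
    have hTadd : T' (1, 0) + T' (0, x' t) = T' (1, x' t) := by
      rw [← map_add]; norm_num
    have hPsplit : P (1, x' t, x'' t) = P (1, 0, 0) + P (0, x' t, 0) + P (0, 0, x'' t) := by
      rw [← map_add, ← map_add]
      norm_num
    have hD : (fderiv ℝ (fun y => L (t, y, x' t)) (x t) (X t (x t))
          + fderiv ℝ (fun v => L (t, x t, v)) (x' t) (X' (1, x' t)))
        + ((P (1, x' t, x'' t)
            - (fderiv ℝ (fun y => L (t, y, x' t)) (x t) (x' t)
              + fderiv ℝ (fun v => L (t, x t, v)) (x' t) (x'' t))) * T t (x t)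
          + (L (t, x t, x' t) - fderiv ℝ (fun v => L (t, x t, v)) (x' t) (x' t))
              * T' (1, x' t)) = 0 := by
      rw [hPsplit, ← hqw, ← hpu, ← hXadd, ← hTadd, map_add]
      linarith [hinvt]
    exact hD ▸ hF
  refine ⟨f a, fun t ht => ?_⟩
  rw [hfeq]
  have hcont : ContinuousOn f (Set.Icc a b) := fun s hs => (key s hs).continuousWithinAt
  have hderiv : ∀ s ∈ Set.Ico a b, HasDerivWithinAt f 0 (Set.Ici s) s := by
    intro s hs
    exact HasDerivWithinAt.mono_of_mem_nhdsWithin (key s (Set.mem_Icc_of_Ico hs)) (Icc_mem_nhdsGE_of_mem hs)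
  exact constant_of_has_deriv_right_zero hcont hderiv t ht
end
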